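/- arXiv:2008.00133 — 2 statements merged into one kernel-verified Lean document; each statement's English description precedes it below -/
import Mathlib

section
/- Let n ≥ 1, x ≥ 1, and let (a_0,…,a_k) be nonnegative integers with a_0 ≥ 1 (when k = 0, interpret references to a_1 by extending the tuple with a_1 = 0). Then Q_n^{(x)}(a_0,…,a_k) = 2·Q_{n-1}^{(x)}(a_0,…,a_k) + Q_{n-1}^{(x-1)}(1, a_0 − 1, a_1, …, a_k) + Q_{n-1}^{(x)}(a_0 − 1, a_1 + 1, a_2, …, a_k) − Q_{n-1}^{(x-1)}(1, a_0, a_1, …, a_k) − Q_{n-1}^{(x)}(a_0 + 1, a_1, …, a_k) − Q_{n-1}^{(x)}(a_0, a_1 + 1, a_2, …, a_k). -/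
/-- A Dyck path: a finite sequence of ±1 steps with all partial sums nonnegative
and total sum zero. -/
def IsDyckPath (p : List ℤ) : Prop :=
  (∀ s ∈ p, s = 1 ∨ s = -1) ∧ (∀ k, 0 ≤ (p.take k).sum) ∧ p.sum = 0

/-- The height of a path: the maximum of its partial sums (0 for the empty path). -/
def pathHeight (p : List ℤ) : ℕ :=
  Finset.sup (Finset.range (p.length + 1)) (fun k => ((p.take k).sum).toNat)

/-- Super-Catalan numbers `T(m,n) = (2m)!(2n)!/(2·m!·n!·(m+n)!)`, as a rational number. -/
def superCatalan (m n : ℕ) : ℚ :=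
  ((2 * m).factorial * (2 * n).factorial : ℚ) /
    (2 * m.factorial * n.factorial * (m + n).factorial)

/-- `G n m k`: the number of `m`-tuples of Dyck paths of total length `2n` all of whose
pairwise height differences are at most `k` (this is `0` when `n < 0`). -/
noncomputable def G (n : ℤ) (m k : ℕ) : ℕ :=
  Nat.card {p : Fin m → List ℤ //
    (∀ i, IsDyckPath (p i)) ∧
    (∑ i, ((p i).length : ℤ)) = 2 * n ∧
    ∀ i j, |(pathHeight (p i) : ℤ) - (pathHeight (p j) : ℤ)| ≤ (k : ℤ)}

/-- The path-height function `P n [a₁,…,aₘ]`: the number of `m`-tuples of Dyck paths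
of total length `2n` whose `i`-th path has height `aᵢ`. -/
noncomputable def P (n : ℤ) (a : List ℕ) : ℕ :=
  Nat.card {p : Fin a.length → List ℤ //
    (∀ i, IsDyckPath (p i)) ∧
    (∑ i, ((p i).length : ℤ)) = 2 * n ∧
    ∀ i, pathHeight (p i) = a.get i}

/-- `Qx n x [a₀,…,a_k]` is `P n` evaluated at `a₀` copies of `x`, `a₁` copies of `x+1`, …,
`a_k` copies of `x+k`. -/
noncomputable def Qx (n : ℤ) (x : ℕ) (a : List ℕ) : ℕ :=
  P n (a.zipIdx.flatMap fun q => List.replicate q.1 (x + q.2))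

/-- The grouped path-height function `Q n a = ∑_{x=0}^∞ Qx n x a`. Whenever some entry
of `a` is positive (as in every application below) all terms with `x > n` vanish, since
a Dyck path of height at least `x` has length at least `2x`; so the infinite sum equals
its truncation at `x = n`. -/
noncomputable def Q (n : ℤ) (a : List ℕ) : ℕ :=
  ∑ x ∈ Finset.range (n.toNat + 1), Qx n x a

namespace DyckAux

lemma counts (p : List ℤ) (h : ∀ s ∈ p, s = 1 ∨ s = -1) :
    p.sum = (p.count 1 : ℤ) - p.count (-1) ∧ p.length = p.count 1 + p.count (-1) := by
  induction p with
  | nil => simp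
  | cons a t ih =>
    obtain ⟨h1, h2⟩ := ih (fun s hs => h s (by simp [hs]))
    obtain ha | ha := h a (by simp) <;> subst ha <;> constructor <;>
      simp [List.count_cons, h1, h2] <;> push_cast <;> ring

lemma length_even {p : List ℤ} (hp : IsDyckPath p) : ∃ m, p.length = 2 * m := by
  obtain ⟨h1, h2⟩ := counts p hp.1
  refine ⟨p.count 1, ?_⟩
  have := hp.2.2
  omega

lemma height_le {p : List ℤ} (h : ℕ) :
    pathHeight p ≤ h ↔ ∀ k ∈ Finset.range (p.length + 1), ((p.take k).sum).toNat ≤ h :=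
  Finset.sup_le_iff

lemma le_height {p : List ℤ} (k : ℕ) (hk : k ≤ p.length) :
    ((p.take k).sum).toNat ≤ pathHeight p := by
  simp only [pathHeight]
  exact Finset.le_sup (f := fun k => ((p.take k).sum).toNat)
    (by simp only [Finset.mem_range]; omega)

lemma take_append_sum (p r : List ℤ) (k : ℕ) :
    ((p ++ r).take k).sum = (p.take k).sum + (r.take (k - p.length)).sum := by
  rw [List.take_append, List.sum_append]

lemma isDyck_append {p r : List ℤ} (hp : IsDyckPath p) (hr : IsDyckPath r) :
    IsDyckPath (p ++ r) := by
  refine ⟨?_, ?_, ?_⟩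
  · intro s hs; rcases List.mem_append.1 hs with h | h
    exacts [hp.1 s h, hr.1 s h]
  · intro k; rw [take_append_sum]
    exact add_nonneg (hp.2.1 k) (hr.2.1 _)
  · rw [List.sum_append, hp.2.2, hr.2.2]; ring

lemma height_append {p r : List ℤ} (hsum : p.sum = 0) :
    pathHeight (p ++ r) = max (pathHeight p) (pathHeight r) := by
  apply le_antisymm
  · rw [height_le]
    intro k _
    rcases le_or_gt k p.length with hk | hk
    · have : ((p ++ r).take k).sum = (p.take k).sum := by
        rw [take_append_sum]; simp [Nat.sub_eq_zero_of_le hk]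
      rw [this]
      exact le_trans (le_height k hk) (le_max_left _ _)
    · have h1 : ((p ++ r).take k).sum = (r.take (k - p.length)).sum := by
        rw [take_append_sum, List.take_of_length_le (le_of_lt hk), hsum, zero_add]
      rw [h1]
      rcases le_or_gt (k - p.length) r.length with h2 | h2
      · exact le_trans (le_height _ h2) (le_max_right _ _)
      · have h3 : r.take (k - p.length) = r.take r.length := by
          rw [List.take_of_length_le (le_of_lt h2), List.take_length]
        rw [h3]
        exact le_trans (le_height _ le_rfl) (le_max_right _ _)
  · apply max_le
    · rw [height_le]; intro k hk
      simp only [Finset.mem_range] at hk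
      have : (p.take k).sum = ((p ++ r).take k).sum := by
        rw [take_append_sum]
        have h0 : k - p.length = 0 := by omega
        simp [h0]
      rw [this]
      apply le_height
      simp; omega
    · rw [height_le]; intro k hk
      simp only [Finset.mem_range] at hk
      have e1 : p.length + k - p.length = k := by omega
      have : (r.take k).sum = ((p ++ r).take (p.length + k)).sum := by
        rw [take_append_sum, e1, List.take_of_length_le (l := p) (by omega), hsum, zero_add]
      rw [this]
      apply le_height
      simp; omega

lemma height_wrap {q : List ℤ} (hq : IsDyckPath q) :
    pathHeight (1 :: q ++ [(-1 : ℤ)]) = pathHeight q + 1 := by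
  have key : ∀ k, (((1 : ℤ) :: q ++ [(-1:ℤ)]).take k).sum =
      if k = 0 then 0 else if k ≤ q.length + 1 then 1 + (q.take (k-1)).sum else 0 := by
    intro k
    match k with
    | 0 => simp
    | (j+1) =>
      simp only [Nat.succ_ne_zero, if_false]
      have : ((1 : ℤ) :: q ++ [(-1:ℤ)]).take (j+1) = 1 :: ((q ++ [(-1:ℤ)]).take j) := by
        simp [List.take_succ_cons]
      rw [this, List.sum_cons, take_append_sum]
      rcases le_or_gt (j+1) (q.length + 1) with h | h
      · have : j - q.length = 0 ∨ (j - q.length = 1 ∧ j = q.length + 1) := by omega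
        rcases this with h2 | ⟨h2, h3⟩
        · simp [h, h2, Nat.add_sub_cancel]
        · omega
      · rw [if_neg (by omega), List.take_of_length_le (l := q) (by omega),
          List.take_of_length_le (by simp; omega)]
        simp [hq.2.2]
  apply le_antisymm
  · rw [height_le]
    intro k _
    rw [key k]
    split
    · omega
    · split
      · have hs := hq.2.1 (k-1)
        have := le_height (p := q) (k-1) (by omega)
        omega
      · omega
  · obtain ⟨j, hj, hsup⟩ := Finset.exists_mem_eq_sup (Finset.range (q.length + 1))
      (by simp) (fun k => ((q.take k).sum).toNat)
    simp only [Finset.mem_range] at hj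
    have key2 : pathHeight q + 1 = (((1:ℤ) :: q ++ [(-1:ℤ)]).take (j+1)).sum.toNat := by
      rw [key (j+1), if_neg (by omega), if_pos (by omega)]
      have h0 := hq.2.1 j
      simp only [Nat.add_sub_cancel, pathHeight]
      rw [hsup]; omega
    rw [key2]
    apply le_height
    simp; omega

lemma height_pos {p : List ℤ} (hp : IsDyckPath p) (hne : p ≠ []) : 1 ≤ pathHeight p := by
  obtain ⟨a, t, rfl⟩ := List.exists_cons_of_ne_nil hne
  have h1 := hp.2.1 1
  simp only [List.take_succ_cons, List.take_zero, List.sum_cons, List.sum_nil, add_zero] at h1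
  rcases hp.1 a (by simp) with ha | ha
  · have h2 : (((a :: t).take 1).sum).toNat = 1 := by simp [ha]
    have := le_height (p := a :: t) 1 (by simp)
    omega
  · omega

lemma head_one {p : List ℤ} (hp : IsDyckPath p) {a : ℤ} {t : List ℤ} (h : p = a :: t) : a = 1 := by
  subst h
  have h1 := hp.2.1 1
  simp at h1
  rcases hp.1 a (by simp) with ha | ha
  · exact ha
  · omega


lemma wrap_isDyck {q r : List ℤ} (hq : IsDyckPath q) (hr : IsDyckPath r) :
    IsDyckPath (1 :: q ++ (-1) :: r) := by
  have h1 : IsDyckPath (1 :: q ++ [(-1:ℤ)]) := by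
    refine ⟨?_, ?_, ?_⟩
    · intro s hs
      simp only [List.cons_append, List.mem_cons, List.mem_append, List.mem_singleton] at hs
      rcases hs with h | h | h
      · left; exact h
      · exact hq.1 s h
      · right; simpa using h
    · intro k
      match k with
      | 0 => simp
      | (j+1) =>
        have : ((1:ℤ) :: q ++ [(-1:ℤ)]).take (j+1) = 1 :: ((q ++ [(-1:ℤ)]).take j) := by
          simp [List.take_succ_cons]
        rw [this, List.sum_cons, take_append_sum]
        have h1 := hq.2.1 j
        have h2 : (([(-1:ℤ)]).take (j - q.length)).sum ≥ -1 := by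
          match (j - q.length) with
          | 0 => simp
          | (i+1) => simp
        omega
    · simp [hq.2.2]
  have : (1 :: q ++ (-1) :: r) = (1 :: q ++ [(-1:ℤ)]) ++ r := by simp
  rw [this]
  exact isDyck_append h1 hr

lemma wrap_height {q r : List ℤ} (hq : IsDyckPath q) (hr : IsDyckPath r) :
    pathHeight (1 :: q ++ (-1) :: r) = max (pathHeight q + 1) (pathHeight r) := by
  have e : (1 :: q ++ (-1) :: r) = (1 :: q ++ [(-1:ℤ)]) ++ r := by simp
  rw [e, height_append (by simp [hq.2.2]), height_wrap hq]

lemma wrap_length {q r : List ℤ} :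
    ((1:ℤ) :: q ++ (-1) :: r).length = q.length + r.length + 2 := by
  simp; omega

lemma wrap_inj {q r q' r' : List ℤ} (hq : IsDyckPath q) (hq' : IsDyckPath q')
    (h : (1:ℤ) :: q ++ (-1) :: r = 1 :: q' ++ (-1) :: r') : q = q' ∧ r = r' := by
  have hlen : q.length = q'.length := by
    by_contra hne
    -- wlog via helper
    have key : ∀ (q q' r r' : List ℤ), IsDyckPath q → IsDyckPath q' →
        (1:ℤ) :: q ++ (-1) :: r = 1 :: q' ++ (-1) :: r' → q.length < q'.length → False := by
      intro q q' r r' hq hq' h hlt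
      have h1 : (((1:ℤ) :: q ++ (-1) :: r).take (q.length + 2)).sum = 0 := by
        have e : ((1:ℤ) :: q ++ (-1) :: r).take (q.length + 2) = 1 :: q ++ [(-1:ℤ)] := by
          have : (1:ℤ) :: q ++ (-1) :: r = (1 :: q ++ [(-1:ℤ)]) ++ r := by simp
          have hl : ((1:ℤ) :: q ++ [(-1:ℤ)]).length = q.length + 2 := by
            simp
            try omega
          rw [this, List.take_append]
          rw [List.take_of_length_le (l := (1:ℤ) :: q ++ [(-1:ℤ)]) (by omega)]
          rw [Nat.sub_eq_zero_of_le (by omega)]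
          rw [List.take_zero, List.append_nil]
        rw [e]
        simp [hq.2.2]
      have h2 : (((1:ℤ) :: q' ++ (-1) :: r').take (q.length + 2)).sum ≥ 1 := by
        have e : ((1:ℤ) :: q' ++ (-1) :: r').take (q.length + 2) = 1 :: (q'.take (q.length + 1)) := by
          simp only [List.cons_append, List.take_succ_cons, List.cons.injEq, true_and]
          rw [List.take_append, Nat.sub_eq_zero_of_le (by omega),
            List.take_zero, List.append_nil]
        rw [e, List.sum_cons]
        have := hq'.2.1 (q.length + 1)
        omega
      rw [h] at h1
      omega
    rcases Nat.lt_or_ge q.length q'.length with hlt | hge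
    · exact key q q' r r' hq hq' h hlt
    · exact key q' q r' r hq' hq h.symm (by omega)
  have h2 := h
  simp only [List.cons_append, List.cons.injEq, true_and] at h2
  have := List.append_inj h2 (by rw [hlen])
  obtain ⟨e1, e2⟩ := this
  simp only [List.cons.injEq, true_and] at e2
  exact ⟨e1, e2⟩

lemma take_sum_succ (p : List ℤ) (k : ℕ) (hk : k < p.length) :
    (p.take (k+1)).sum = (p.take k).sum + p.get ⟨k, hk⟩ := by
  rw [List.take_succ, List.sum_append]
  have : p[k]? = some (p.get ⟨k, hk⟩) := by
    rw [List.getElem?_eq_getElem hk]; rfl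
  rw [this]
  simp

lemma first_return {p : List ℤ} (hp : IsDyckPath p) (hne : p ≠ []) :
    ∃ q r, IsDyckPath q ∧ IsDyckPath r ∧ p = 1 :: q ++ (-1) :: r := by
  obtain ⟨a, t, rfl⟩ := List.exists_cons_of_ne_nil hne
  have ha : a = 1 := head_one hp rfl
  subst ha
  set p := (1:ℤ) :: t with hp_def
  have hlen : 1 ≤ p.length := by simp [hp_def]
  have hex : ∃ j, 1 ≤ j ∧ (p.take j).sum = 0 := by
    refine ⟨p.length, hlen, ?_⟩
    rw [List.take_length]; exact hp.2.2
  classical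
  set i := Nat.find hex with hi_def
  obtain ⟨hi1, hi2⟩ := Nat.find_spec hex
  have hmin : ∀ m, 1 ≤ m → m < i → (p.take m).sum ≥ 1 := by
    intro m hm1 hm2
    have := Nat.find_min hex hm2
    have h0 := hp.2.1 m
    simp only [not_and] at this
    have := this hm1
    omega
  have hile : i ≤ p.length := Nat.find_le ⟨hlen, by rw [List.take_length]; exact hp.2.2⟩
  have hi2' : 2 ≤ i := by
    rcases Nat.lt_or_ge i 2 with h | h
    · exfalso
      have h1 : i = 1 := by omega
      have h2 : (p.take 1).sum = 0 := by rw [← h1]; exact hi2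
      simp [hp_def] at h2
    · exact h
  -- the step at position i-1 is -1, and sum at i-1 is 1
  have hstep : (p.take (i-1)).sum = 1 := by
    have h1 := hmin (i-1) (by omega) (by omega)
    have h2 : (p.take ((i-1)+1)).sum = (p.take (i-1)).sum + p.get ⟨i-1, by omega⟩ :=
      take_sum_succ p (i-1) (by omega)
    have h3 : (i-1)+1 = i := by omega
    rw [h3, hi2] at h2
    rcases hp.1 (p.get ⟨i-1, by omega⟩) (List.get_mem _ _) with h4 | h4 <;> omega
  set q : List ℤ := t.take (i-2) with hq_def
  set r : List ℤ := t.drop (i-1) with hr_def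
  have hts : ∀ j, (p.take (j+1)).sum = 1 + (t.take j).sum := by
    intro j; simp [hp_def, List.take_succ_cons]
  have hqs : ∀ j, (q.take j).sum = (p.take ((min j (i-2)) + 1)).sum - 1 := by
    intro j
    rw [hq_def, List.take_take, hts]
    ring
  have htl : p.length = t.length + 1 := by simp [hp_def]
  have hmid : t[i-2]'(by omega) = -1 := by
    have h2 : (p.take ((i-1)+1)).sum = (p.take (i-1)).sum + p.get ⟨i-1, by omega⟩ :=
      take_sum_succ p (i-1) (by omega)
    have h3 : (i-1)+1 = i := by omega
    rw [h3, hi2, hstep] at h2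
    have hgl : p.get ⟨i-1, by omega⟩ = t[i-2]'(by omega) := by
      simp only [List.get_eq_getElem, hp_def,
        show i - 1 = (i-2)+1 from by omega, List.getElem_cons_succ]
    rw [hgl] at h2
    omega
  have hrs : ∀ k, (r.take k).sum = (p.take (i + k)).sum := by
    intro k
    have e1 : r.take k = (p.take (i+k)).drop i := by
      rw [List.drop_take, hr_def]
      congr 1
      · omega
      · simp only [hp_def, List.drop_succ_cons.symm]
        rw [show i = (i-1)+1 from by omega]
        simp [List.drop_succ_cons]
    have e2 := List.sum_take_add_sum_drop (p.take (i+k)) i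
    rw [List.take_take, show i ⊓ (i+k) = i from by omega, hi2] at e2
    rw [e1]
    omega
  refine ⟨q, r, ?_, ?_, ?_⟩
  · refine ⟨?_, ?_, ?_⟩
    · intro s hs
      have : s ∈ t := List.mem_of_mem_take hs
      exact hp.1 s (by simp [hp_def]; right; exact this)
    · intro k
      rw [hqs k]
      have := hmin ((min k (i-2)) + 1) (by omega) (by omega)
      omega
    · have h0 : q.sum = (q.take q.length).sum := by rw [List.take_length]
      rw [h0, hqs]
      have hql : q.length = min (i-2) t.length := by simp [hq_def]
      have e : q.length ⊓ (i-2) = i - 2 := by omega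
      rw [e, show (i-2) + 1 = i - 1 from by omega, hstep]
      ring
  · refine ⟨?_, ?_, ?_⟩
    · intro s hs
      have : s ∈ t := List.mem_of_mem_drop hs
      exact hp.1 s (by simp [hp_def]; right; exact this)
    · intro k
      rw [hrs k]
      exact hp.2.1 _
    · have h0 : r.sum = (r.take r.length).sum := by rw [List.take_length]
      rw [h0, hrs]
      have : i + r.length ≥ p.length := by
        have : r.length = t.length - (i-1) := by simp [hr_def]
        omega
      rw [List.take_of_length_le (by omega)]
      exact hp.2.2
  · have h1 : t = t.take (i-2) ++ t.drop (i-2) := (List.take_append_drop _ _).symm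
    have h2 : t.drop (i-2) = t[i-2]'(by omega) :: t.drop ((i-2)+1) :=
      List.drop_eq_getElem_cons (by omega)
    rw [hmid, show (i-2)+1 = i-1 from by omega] at h2
    show p = 1 :: (q ++ (-1) :: r)
    have ht : t = q ++ (-1) :: r := by
      rw [hq_def, hr_def]
      calc t = t.take (i-2) ++ t.drop (i-2) := h1
      _ = _ := by rw [h2]
    rw [hp_def, ht]


/-! ### Finiteness -/

lemma finite_words (L : ℕ) :
    {p : List ℤ | (∀ s ∈ p, s = 1 ∨ s = -1) ∧ p.length ≤ L}.Finite := by
  have hsub : {p : List ℤ | (∀ s ∈ p, s = 1 ∨ s = -1) ∧ p.length ≤ L} ⊆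
      (fun l : List Bool => l.map (fun b => if b then (1:ℤ) else -1)) '' {l | l.length ≤ L} := by
    rintro p ⟨h1, h2⟩
    refine ⟨p.map (fun s => decide (s = 1)), by simpa using h2, ?_⟩
    simp only [List.map_map]
    have : ∀ s ∈ p, ((fun b => if b then (1:ℤ) else -1) ∘ fun s => decide (s = 1)) s = id s := by
      intro s hs
      rcases h1 s hs with h | h <;> simp [h]
    rw [List.map_congr_left this, List.map_id]
  exact Set.Finite.subset ((List.finite_length_le Bool L).image _) hsub

lemma finite_setP (Q : List ℤ → Prop) (L : ℕ)
    (hQ : ∀ p, Q p → (∀ s ∈ p, s = 1 ∨ s = -1) ∧ p.length ≤ L) :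
    {p : List ℤ | Q p}.Finite :=
  (finite_words L).subset (fun p hp => hQ p hp)

lemma finite_single (nn : ℕ) (R : ℕ → Prop) :
    Finite {p : List ℤ // IsDyckPath p ∧ p.length = nn ∧ R (pathHeight p)} := by
  have := finite_setP (fun p => IsDyckPath p ∧ p.length = nn ∧ R (pathHeight p)) nn
    (fun p hp => ⟨hp.1.1, le_of_eq hp.2.1⟩)
  exact this.to_subtype

lemma nat_card_sigma {k : ℕ} (F : Fin k → Type*) [∀ i, Finite (F i)] :
    Nat.card (Σ i, F i) = ∑ i, Nat.card (F i) := by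
  letI : ∀ i, Fintype (F i) := fun i => Fintype.ofFinite _
  simp [Nat.card_eq_fintype_card, Fintype.card_sigma]

/-! ### Counting functions -/

noncomputable def Dc (n h : ℕ) : ℕ :=
  Nat.card {p : List ℤ // IsDyckPath p ∧ p.length = 2*n ∧ pathHeight p = h}

noncomputable def Cc (n h : ℕ) : ℕ :=
  Nat.card {p : List ℤ // IsDyckPath p ∧ p.length = 2*n ∧ pathHeight p ≤ h}

lemma cc_zero_n (h : ℕ) : Cc 0 h = 1 := by
  have hu : ∀ z : {p : List ℤ // IsDyckPath p ∧ p.length = 2*0 ∧ pathHeight p ≤ h},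
      z = ⟨[], ⟨by simp [IsDyckPath], by simp, by simp [pathHeight]⟩⟩ := by
    rintro ⟨p, hp⟩
    have : p = [] := List.length_eq_zero_iff.1 (by omega)
    exact Subtype.ext this
  haveI : Unique {p : List ℤ // IsDyckPath p ∧ p.length = 2*0 ∧ pathHeight p ≤ h} :=
    ⟨⟨⟨[], ⟨by simp [IsDyckPath], by simp, by simp [pathHeight]⟩⟩⟩, hu⟩
  exact Nat.card_unique

lemma cc_zero_h (n : ℕ) : Cc (n+1) 0 = 0 := by
  haveI : IsEmpty {p : List ℤ // IsDyckPath p ∧ p.length = 2*(n+1) ∧ pathHeight p ≤ 0} := by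
    refine ⟨fun z => ?_⟩
    obtain ⟨p, h1, h2, h3⟩ := z
    have hne : p ≠ [] := by
      intro h; rw [h] at h2; simp at h2
    have := height_pos h1 hne
    omega
  exact Nat.card_of_isEmpty

lemma dc_zero (n : ℕ) : Dc n 0 = Cc n 0 := by
  exact Nat.card_congr (Equiv.subtypeEquivRight (fun p => by
    constructor
    · rintro ⟨h1, h2, h3⟩; exact ⟨h1, h2, by omega⟩
    · rintro ⟨h1, h2, h3⟩; exact ⟨h1, h2, by omega⟩))

lemma cc_split (n h : ℕ) : Cc n (h+1) = Cc n h + Dc n (h+1) := by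
  have hfin : ∀ R : ℕ → Prop, {p : List ℤ | IsDyckPath p ∧ p.length = 2*n ∧ R (pathHeight p)}.Finite :=
    fun R => finite_setP _ (2*n) (fun p hp => ⟨hp.1.1, le_of_eq hp.2.1⟩)
  have e1 : {p : List ℤ | IsDyckPath p ∧ p.length = 2*n ∧ pathHeight p ≤ h+1} =
      {p : List ℤ | IsDyckPath p ∧ p.length = 2*n ∧ pathHeight p ≤ h} ∪
      {p : List ℤ | IsDyckPath p ∧ p.length = 2*n ∧ pathHeight p = h+1} := by
    ext p
    simp only [Set.mem_setOf_eq, Set.mem_union]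
    constructor
    · rintro ⟨h1, h2, h3⟩
      rcases Nat.lt_or_ge (pathHeight p) (h+1) with h4 | h4
      · exact Or.inl ⟨h1, h2, by omega⟩
      · exact Or.inr ⟨h1, h2, by omega⟩
    · rintro (⟨h1, h2, h3⟩ | ⟨h1, h2, h3⟩) <;> exact ⟨h1, h2, by omega⟩
  have hdisj : Disjoint {p : List ℤ | IsDyckPath p ∧ p.length = 2*n ∧ pathHeight p ≤ h}
      {p : List ℤ | IsDyckPath p ∧ p.length = 2*n ∧ pathHeight p = h+1} := by
    rw [Set.disjoint_left]
    rintro p ⟨h1, h2, h3⟩ ⟨h1', h2', h3'⟩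
    omega
  have c1 : Cc n (h+1) = Set.ncard {p : List ℤ | IsDyckPath p ∧ p.length = 2*n ∧ pathHeight p ≤ h+1} :=
    Nat.card_coe_set_eq _
  have c2 : Cc n h = Set.ncard {p : List ℤ | IsDyckPath p ∧ p.length = 2*n ∧ pathHeight p ≤ h} :=
    Nat.card_coe_set_eq _
  have c3 : Dc n (h+1) = Set.ncard {p : List ℤ | IsDyckPath p ∧ p.length = 2*n ∧ pathHeight p = h+1} :=
    Nat.card_coe_set_eq _
  rw [c1, c2, c3, e1, Set.ncard_union_eq hdisj (hfin (fun t => t ≤ h)) (hfin (fun t => t = h+1))]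

lemma cc_rec (n h : ℕ) :
    Cc (n+1) (h+1) = ∑ m ∈ Finset.range (n+1), Cc m h * Cc (n-m) (h+1) := by
  classical
  haveI hf1 : ∀ m : ℕ, Finite {q : List ℤ // IsDyckPath q ∧ q.length = 2*m ∧ pathHeight q ≤ h} :=
    fun m => finite_single (2*m) (fun t => t ≤ h)
  haveI hf2 : ∀ m : ℕ, Finite {r : List ℤ // IsDyckPath r ∧ r.length = 2*(n-m) ∧ pathHeight r ≤ h+1} :=
    fun m => finite_single (2*(n-m)) (fun t => t ≤ h+1)
  have main : Nat.card {p : List ℤ // IsDyckPath p ∧ p.length = 2*(n+1) ∧ pathHeight p ≤ h+1} =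
      Nat.card (Σ m : Fin (n+1),
        {q : List ℤ // IsDyckPath q ∧ q.length = 2*(m:ℕ) ∧ pathHeight q ≤ h} ×
        {r : List ℤ // IsDyckPath r ∧ r.length = 2*(n-(m:ℕ)) ∧ pathHeight r ≤ h+1}) := by
    apply Nat.card_congr
    apply Equiv.symm
    refine Equiv.ofBijective (fun z =>
      ⟨1 :: z.2.1.1 ++ (-1) :: z.2.2.1, wrap_isDyck z.2.1.2.1 z.2.2.2.1, ?_, ?_⟩) ⟨?_, ?_⟩
    · rw [wrap_length, z.2.1.2.2.1, z.2.2.2.2.1]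
      have := z.1.2
      omega
    · rw [wrap_height z.2.1.2.1 z.2.2.2.1]
      have h1 := z.2.1.2.2.2
      have h2 := z.2.2.2.2.2
      omega
    · rintro ⟨m, ⟨q, hq⟩, ⟨r, hr⟩⟩ ⟨m', ⟨q', hq'⟩, ⟨r', hr'⟩⟩ heq
      simp only [Subtype.mk.injEq] at heq
      obtain ⟨e1, e2⟩ := wrap_inj hq.1 hq'.1 heq
      have hm : m = m' := by
        have l1 := hq.2.1
        have l2 := hq'.2.1
        apply Fin.ext
        rw [e1] at l1
        omega
      subst hm; subst e1; subst e2
      rfl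
    · rintro ⟨p, hp⟩
      have hne : p ≠ [] := by
        intro h; rw [h] at hp; have := hp.2.1; simp at this
      obtain ⟨q, r, hq, hr, hpe⟩ := first_return hp.1 hne
      obtain ⟨m, hm⟩ := length_even hq
      have hlen : p.length = 2*(n+1) := hp.2.1
      have hlen2 : q.length + r.length + 2 = 2*(n+1) := by
        rw [hpe, wrap_length] at hlen; omega
      have hhe : max (pathHeight q + 1) (pathHeight r) ≤ h + 1 := by
        have := hp.2.2
        rw [hpe, wrap_height hq hr] at this
        exact this
      obtain ⟨mr, hmr⟩ := length_even hr
      refine ⟨⟨⟨m, by omega⟩, ⟨q, hq, hm, by omega⟩, ⟨r, hr, ?_, ?_⟩⟩, Subtype.ext hpe.symm⟩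
      · show r.length = 2*(n-m)
        omega
      · show pathHeight r ≤ h+1
        omega
  rw [show Cc (n+1) (h+1) = Nat.card {p : List ℤ // IsDyckPath p ∧ p.length = 2*(n+1) ∧ pathHeight p ≤ h+1} from rfl, main,
    nat_card_sigma]
  rw [← Fin.sum_univ_eq_sum_range (fun m => Cc m h * Cc (n-m) (h+1))]
  congr 1
  ext m
  rw [Nat.card_prod]
  rfl


/-! ### Power series -/

open PowerSeries

noncomputable def Cs : ℕ → PowerSeries ℤ
  | 0 => 0
  | (h+1) => PowerSeries.mk fun n => (Cc n h : ℤ)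

lemma cs_zero : Cs 0 = 0 := rfl

lemma cs_succ (h : ℕ) : Cs (h+1) = PowerSeries.mk fun n => (Cc n h : ℤ) := rfl

lemma cs_one : Cs 1 = 1 := by
  apply PowerSeries.ext
  intro n
  show (PowerSeries.coeff n) (PowerSeries.mk fun n => (Cc n 0 : ℤ)) = _
  rw [PowerSeries.coeff_mk, PowerSeries.coeff_one]
  cases n with
  | zero => simp [cc_zero_n]
  | succ m => simp [cc_zero_h]

lemma cs_eq (g : ℕ) : Cs (g+2) = 1 + PowerSeries.X * (Cs (g+1) * Cs (g+2)) := by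
  apply PowerSeries.ext
  intro n
  show (PowerSeries.coeff n) (PowerSeries.mk fun n => (Cc n (g+1) : ℤ)) = _
  rw [PowerSeries.coeff_mk, map_add, PowerSeries.coeff_one]
  cases n with
  | zero =>
    have : (PowerSeries.coeff 0) (PowerSeries.X * (Cs (g+1) * Cs (g+2))) = 0 := by
      rw [PowerSeries.coeff_zero_eq_constantCoeff, map_mul]
      simp
    rw [this, cc_zero_n]
    simp
  | succ m =>
    rw [PowerSeries.coeff_succ_X_mul, if_neg (Nat.succ_ne_zero m), zero_add,
      PowerSeries.coeff_mul, Finset.Nat.sum_antidiagonal_eq_sum_range_succ_mk]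
    have e1 : ∀ k, (PowerSeries.coeff k) (Cs (g+1)) = (Cc k g : ℤ) := fun k => by
      rw [cs_succ, PowerSeries.coeff_mk]
    have e2 : ∀ k, (PowerSeries.coeff k) (Cs (g+2)) = (Cc k (g+1) : ℤ) := fun k => by
      rw [cs_succ, PowerSeries.coeff_mk]
    simp only [e1, e2]
    rw [cc_rec m g]
    push_cast
    rfl

lemma cs_rel (h : ℕ) : Cs (h+1) * (1 - PowerSeries.X * Cs h) = 1 := by
  cases h with
  | zero => rw [cs_one, cs_zero]; simp
  | succ g =>
    have := cs_eq g
    linear_combination this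

noncomputable def Fs (h : ℕ) : PowerSeries ℤ := Cs (h+1) - Cs h

lemma fs_coeff (n h : ℕ) : PowerSeries.coeff n (Fs h) = (Dc n h : ℤ) := by
  cases h with
  | zero =>
    show (PowerSeries.coeff n) (PowerSeries.mk (fun n => (Cc n 0 : ℤ)) - 0) = _
    rw [sub_zero, PowerSeries.coeff_mk, dc_zero]
  | succ g =>
    show (PowerSeries.coeff n) (PowerSeries.mk (fun n => (Cc n (g+1) : ℤ))
      - PowerSeries.mk (fun n => (Cc n g : ℤ))) = _
    rw [map_sub, PowerSeries.coeff_mk, PowerSeries.coeff_mk]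
    have := cc_split n g
    push_cast [this]
    ring

set_option maxRecDepth 20000 in
set_option maxHeartbeats 2000000 in
lemma fs_identity (y : ℕ) :
    Fs (y+1) = PowerSeries.X * (2 * Fs (y+1) + Fs y + Fs (y+2)
      - Fs (y+1) * (Fs y + Fs (y+1) + Fs (y+2))) := by
  have hA : Cs (y+1) * (1 - PowerSeries.X * Cs y) = 1 := cs_rel y
  have hB : Cs (y+2) * (1 - PowerSeries.X * Cs (y+1)) = 1 := cs_rel (y+1)
  have hC : Cs (y+3) * (1 - PowerSeries.X * Cs (y+2)) = 1 := cs_rel (y+2)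
  set A := Cs y
  set B := Cs (y+1)
  set C := Cs (y+2)
  set D := Cs (y+3)
  set X := (PowerSeries.X : PowerSeries ℤ)
  have hA0 : (1 - X * A) ≠ 0 := by
    intro h; rw [h, mul_zero] at hA; exact one_ne_zero hA.symm
  have hB0 : (1 - X * B) ≠ 0 := by
    intro h; rw [h, mul_zero] at hB; exact one_ne_zero hB.symm
  have hC0 : (1 - X * C) ≠ 0 := by
    intro h; rw [h, mul_zero] at hC; exact one_ne_zero hC.symm
  have hM : ((1 - X*A)^3 * ((1 - X*B)^2 * (1 - X*C))) ≠ 0 :=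
    mul_ne_zero (pow_ne_zero _ hA0) (mul_ne_zero (pow_ne_zero _ hB0) hC0)
  have eF0 : Fs y = B - A := rfl
  have eF1 : Fs (y+1) = C - B := rfl
  have eF2 : Fs (y+2) = D - C := rfl
  rw [eF0, eF1, eF2]
  apply mul_left_cancel₀ hM
  linear_combination
    ((1:PowerSeries ℤ)*B^2*A^3*X^5 + (-3:PowerSeries ℤ)*B^2*A^2*X^4 + (3:PowerSeries ℤ)*B^2*A*X^3 + (-1:PowerSeries ℤ)*B^2*X^2 + (2:PowerSeries ℤ)*B*A^3*X^5 + (-2:PowerSeries ℤ)*B*A^3*X^4 + (-6:PowerSeries ℤ)*B*A^2*X^4 + (6:PowerSeries ℤ)*B*A^2*X^3 + (6:PowerSeries ℤ)*B*A*X^3 + (-6:PowerSeries ℤ)*B*A*X^2 + (-2:PowerSeries ℤ)*B*X^2 + (2:PowerSeries ℤ)*B*X + (1:PowerSeries ℤ)*A^3*X^5 + (-2:PowerSeries ℤ)*A^3*X^4 + (1:PowerSeries ℤ)*A^3*X^3 + (-3:PowerSeries ℤ)*A^2*X^4 + (6:PowerSeries ℤ)*A^2*X^3 + (-3:PowerSeries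 ℤ)*A^2*X^2 + (3:PowerSeries ℤ)*A*X^3 + (-6:PowerSeries ℤ)*A*X^2 + (3:PowerSeries ℤ)*A*X + (-1:PowerSeries ℤ)*X^2 + (2:PowerSeries ℤ)*X + (-1:PowerSeries ℤ)) * hA + ((1:PowerSeries ℤ)*C*B*A^4*X^6 + (1:PowerSeries ℤ)*C*B*A^3*X^6 + (-4:PowerSeries ℤ)*C*B*A^3*X^5 + (-3:PowerSeries ℤ)*C*B*A^2*X^5 + (6:PowerSeries ℤ)*C*B*A^2*X^4 + (3:PowerSeries ℤ)*C*B*A*X^4 + (-4:PowerSeries ℤ)*C*B*A*X^3 + (-1:PowerSeries ℤ)*C*B*X^3 + (1:PowerSeries ℤ)*C*B*X^2 + (-1:PowerSeries ℤ)*C*A^4*X^5 + (-1:PowerSeries ℤ)*C*A^3*X^5 + (4:PowerSeries ℤ)*C*A^3*X^4 + (3:PowerSeries ℤ)*C*A^2*X^4 + (-6:PowerSeries ℤ)*C*A^2*X^3 + (-3:PowerSeries ℤ)*C*A*X^3 + (4:PowerSeries ℤ)*C*A*X^2 + (1:PowerSeries ℤ)*C*X^2 + (-1:PowerSeries ℤ)*C*X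 + (-1:PowerSeries ℤ)*B^2*A^4*X^6 + (-1:PowerSeries ℤ)*B^2*A^3*X^6 + (4:PowerSeries ℤ)*B^2*A^3*X^5 + (3:PowerSeries ℤ)*B^2*A^2*X^5 + (-6:PowerSeries ℤ)*B^2*A^2*X^4 + (-3:PowerSeries ℤ)*B^2*A*X^4 + (4:PowerSeries ℤ)*B^2*A*X^3 + (1:PowerSeries ℤ)*B^2*X^3 + (-1:PowerSeries ℤ)*B^2*X^2 + (-1:PowerSeries ℤ)*B*A^4*X^6 + (4:PowerSeries ℤ)*B*A^3*X^5 + (-6:PowerSeries ℤ)*B*A^2*X^4 + (4:PowerSeries ℤ)*B*A*X^3 + (-1:PowerSeries ℤ)*B*X^2 + (1:PowerSeries ℤ)*A^4*X^4 + (-1:PowerSeries ℤ)*A^3*X^5 + (1:PowerSeries ℤ)*A^3*X^4 + (-4:PowerSeries ℤ)*A^3*X^3 + (3:PowerSeries ℤ)*A^2*X^4 + (-3:PowerSeries ℤ)*A^2*X^3 + (6:PowerSeries ℤ)*A^2*X^2 + (-3:PowerSeries ℤ)*A*X^3 + (3:PowerSeries ℤ)*A*X^2 + (-4:PowerSeries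 ℤ)*A*X + (1:PowerSeries ℤ)*X^2 + (-1:PowerSeries ℤ)*X + (1:PowerSeries ℤ)) * hB + ((-1:PowerSeries ℤ)*C*B^2*A^3*X^6 + (3:PowerSeries ℤ)*C*B^2*A^2*X^5 + (-3:PowerSeries ℤ)*C*B^2*A*X^4 + (1:PowerSeries ℤ)*C*B^2*X^3 + (2:PowerSeries ℤ)*C*B*A^3*X^5 + (-6:PowerSeries ℤ)*C*B*A^2*X^4 + (6:PowerSeries ℤ)*C*B*A*X^3 + (-2:PowerSeries ℤ)*C*B*X^2 + (-1:PowerSeries ℤ)*C*A^3*X^4 + (3:PowerSeries ℤ)*C*A^2*X^3 + (-3:PowerSeries ℤ)*C*A*X^2 + (1:PowerSeries ℤ)*C*X + (1:PowerSeries ℤ)*B^3*A^3*X^6 + (-3:PowerSeries ℤ)*B^3*A^2*X^5 + (3:PowerSeries ℤ)*B^3*A*X^4 + (-1:PowerSeries ℤ)*B^3*X^3 + (1:PowerSeries ℤ)*B^2*A^3*X^6 + (-2:PowerSeries ℤ)*B^2*A^3*X^5 + (-3:PowerSeries ℤ)*B^2*A^2*X^5 + (6:PowerSeries ℤ)*B^2*A^2*X^4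 + (3:PowerSeries ℤ)*B^2*A*X^4 + (-6:PowerSeries ℤ)*B^2*A*X^3 + (-1:PowerSeries ℤ)*B^2*X^3 + (2:PowerSeries ℤ)*B^2*X^2 + (-2:PowerSeries ℤ)*B*A^3*X^5 + (1:PowerSeries ℤ)*B*A^3*X^4 + (6:PowerSeries ℤ)*B*A^2*X^4 + (-3:PowerSeries ℤ)*B*A^2*X^3 + (-6:PowerSeries ℤ)*B*A*X^3 + (3:PowerSeries ℤ)*B*A*X^2 + (2:PowerSeries ℤ)*B*X^2 + (-1:PowerSeries ℤ)*B*X + (1:PowerSeries ℤ)*A^3*X^4 + (-3:PowerSeries ℤ)*A^2*X^3 + (3:PowerSeries ℤ)*A*X^2 + (-1:PowerSeries ℤ)*X) * hC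


/-! ### Tuples of paths -/

lemma finite_tupleP {m : ℕ} (n : ℤ) (R : (Fin m → List ℤ) → Prop)
    (hR : ∀ p, R p → (∀ i, IsDyckPath (p i)) ∧ (∑ i, ((p i).length : ℤ)) = 2*n) :
    Finite {p : Fin m → List ℤ // R p} := by
  rcases le_or_gt 0 n with hn | hn
  · have hsub : {p : Fin m → List ℤ | R p} ⊆ Set.pi Set.univ
        (fun _ : Fin m => {q : List ℤ | (∀ s ∈ q, s = 1 ∨ s = -1) ∧ q.length ≤ (2*n).toNat}) := by
      intro p hp i _
      obtain ⟨h1, h2⟩ := hR p hp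
      refine ⟨(h1 i).1, ?_⟩
      have hle : ((p i).length : ℤ) ≤ 2*n := by
        rw [← h2]
        exact Finset.single_le_sum (f := fun j => (((p j).length : ℤ)))
          (fun j _ => by positivity) (Finset.mem_univ i)
      omega
    exact ((Set.Finite.pi (fun _ => finite_words _)).subset hsub).to_subtype
  · haveI : IsEmpty {p : Fin m → List ℤ // R p} := by
      refine ⟨fun z => ?_⟩
      obtain ⟨h1, h2⟩ := hR z.1 z.2
      have h3 : (0:ℤ) ≤ ∑ i, ((z.1 i).length : ℤ) := Finset.sum_nonneg (fun i _ => by positivity)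
      omega
    infer_instance

lemma p_nil (n : ℕ) : P (n : ℤ) [] = if n = 0 then 1 else 0 := by
  unfold P
  rcases Nat.eq_zero_or_pos n with rfl | hn
  · rw [if_pos rfl]
    haveI : Unique {p : Fin (List.length ([] : List ℕ)) → List ℤ //
        (∀ i, IsDyckPath (p i)) ∧ (∑ i, ((p i).length : ℤ)) = 2*(((0:ℕ):ℤ)) ∧
          ∀ i, pathHeight (p i) = ([] : List ℕ).get i} := by
      refine ⟨⟨⟨fun i => i.elim0, fun i => i.elim0, by simp, fun i => i.elim0⟩⟩, ?_⟩
      rintro ⟨p, hp⟩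
      exact Subtype.ext (funext fun i => i.elim0)
    exact Nat.card_unique
  · rw [if_neg (by omega)]
    haveI : IsEmpty {p : Fin (List.length ([] : List ℕ)) → List ℤ //
        (∀ i, IsDyckPath (p i)) ∧ (∑ i, ((p i).length : ℤ)) = 2*((n:ℕ):ℤ) ∧
          ∀ i, pathHeight (p i) = ([] : List ℕ).get i} := by
      refine ⟨fun z => ?_⟩
      obtain ⟨p, h1, h2, h3⟩ := z
      have : (∑ i : Fin (List.length ([] : List ℕ)), ((p i).length : ℤ)) = 0 := by simp
      rw [this] at h2
      omega
    exact Nat.card_of_isEmpty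

lemma p_cons (n a : ℕ) (rest : List ℕ) :
    P (n : ℤ) (a :: rest) = ∑ m ∈ Finset.range (n+1), Dc m a * P (((n - m : ℕ) : ℕ) : ℤ) rest := by
  classical
  haveI hf1 : ∀ m : ℕ, Finite {q : List ℤ // IsDyckPath q ∧ q.length = 2*m ∧ pathHeight q = a} :=
    fun m => finite_single (2*m) (fun t => t = a)
  haveI hf2 : ∀ m : ℕ, Finite {t : Fin rest.length → List ℤ //
      (∀ i, IsDyckPath (t i)) ∧ (∑ i, ((t i).length : ℤ)) = 2*(((n-m : ℕ) : ℕ) : ℤ) ∧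
        ∀ i, pathHeight (t i) = rest.get i} :=
    fun m => finite_tupleP _ _ (fun p hp => ⟨hp.1, hp.2.1⟩)
  have main : P (n : ℤ) (a :: rest) = Nat.card (Σ m : Fin (n+1),
      {q : List ℤ // IsDyckPath q ∧ q.length = 2*(m:ℕ) ∧ pathHeight q = a} ×
      {t : Fin rest.length → List ℤ //
        (∀ i, IsDyckPath (t i)) ∧ (∑ i, ((t i).length : ℤ)) = 2*(((n-(m:ℕ) : ℕ) : ℕ) : ℤ) ∧
          ∀ i, pathHeight (t i) = rest.get i}) := by
    unfold P
    simp only [List.length_cons]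
    apply Nat.card_congr
    apply Equiv.symm
    refine Equiv.ofBijective (fun z => ⟨Fin.cons z.2.1.1 z.2.2.1, ?_, ?_, ?_⟩) ⟨?_, ?_⟩
    · intro i
      refine Fin.cases ?_ ?_ i
      · rw [Fin.cons_zero]; exact z.2.1.2.1
      · intro j; rw [Fin.cons_succ]; exact z.2.2.2.1 j
    · show ∑ i : Fin (rest.length + 1), (((Fin.cons z.2.1.1 z.2.2.1 : Fin (rest.length+1) → List ℤ) i).length : ℤ) = _
      rw [Fin.sum_univ_succ]
      simp only [Fin.cons_zero, Fin.cons_succ]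
      rw [z.2.1.2.2.1]
      have h2 := z.2.2.2.2.1
      rw [h2]
      have := z.1.isLt
      push_cast
      omega
    · intro i
      refine Fin.cases ?_ ?_ i
      · rw [Fin.cons_zero]; exact z.2.1.2.2.2
      · intro j; rw [Fin.cons_succ]; exact z.2.2.2.2.2 j
    · rintro ⟨m, ⟨q, hq⟩, ⟨t, ht⟩⟩ ⟨m', ⟨q', hq'⟩, ⟨t', ht'⟩⟩ heq
      simp only [Subtype.mk.injEq] at heq
      have e0 : q = q' := by
        have := congrFun heq 0
        simpa using this
      have e1 : t = t' := by
        funext j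
        have := congrFun heq j.succ
        simpa using this
      have hm : m = m' := by
        apply Fin.ext
        have l1 := hq.2.1
        have l2 := hq'.2.1
        rw [e0] at l1
        omega
      subst hm; subst e0; subst e1; rfl
    · rintro ⟨p, h1, h2, h3⟩
      obtain ⟨m, hm⟩ := length_even (h1 0)
      have hsum2 : ((p 0).length : ℤ) + ∑ i : Fin rest.length, ((p i.succ).length : ℤ) = 2*(n:ℤ) := by
        rw [← h2]
        exact (Fin.sum_univ_succ (fun i => ((p i).length : ℤ))).symm
      have hnn : (0:ℤ) ≤ ∑ i : Fin rest.length, ((p i.succ).length : ℤ) :=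
        Finset.sum_nonneg (fun i _ => by positivity)
      have hmn : m ≤ n := by omega
      refine ⟨⟨⟨m, by omega⟩, ⟨p 0, h1 0, hm, h3 0⟩,
        ⟨Fin.tail p, fun i => h1 i.succ, ?_, fun i => h3 i.succ⟩⟩, ?_⟩
      · show ∑ i : Fin rest.length, ((p i.succ).length : ℤ) = _
        push_cast
        omega
      · exact Subtype.ext (Fin.cons_self_tail p)
  rw [main, nat_card_sigma, ← Fin.sum_univ_eq_sum_range
    (fun k => Dc k a * P (((n - k : ℕ) : ℕ) : ℤ) rest)]
  congr 1
  ext m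
  rw [Nat.card_prod]
  rfl

lemma p_series (l : List ℕ) :
    (PowerSeries.mk fun n => (P (n:ℤ) l : ℤ)) = (l.map Fs).prod := by
  induction l with
  | nil =>
    apply PowerSeries.ext
    intro n
    rw [PowerSeries.coeff_mk]
    simp only [List.map_nil, List.prod_nil, PowerSeries.coeff_one]
    rw [p_nil]
    split <;> simp
  | cons a rest ih =>
    apply PowerSeries.ext
    intro n
    rw [PowerSeries.coeff_mk]
    simp only [List.map_cons, List.prod_cons]
    rw [PowerSeries.coeff_mul, Finset.Nat.sum_antidiagonal_eq_sum_range_succ_mk]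
    have hco : ∀ k, (PowerSeries.coeff k) ((rest.map Fs).prod) = (P ((k:ℕ):ℤ) rest : ℤ) := by
      intro k
      rw [← ih, PowerSeries.coeff_mk]
    simp only [fs_coeff, hco]
    rw [p_cons]
    push_cast
    rfl

noncomputable def myQ : ℕ → List ℕ → PowerSeries ℤ
  | _, [] => 1
  | x, (b :: rest) => Fs x ^ b * myQ (x+1) rest

lemma enum_flat (rest : List ℕ) : ∀ i x,
    (((rest.zipIdx i).flatMap fun q => List.replicate q.1 (x + q.2)).map Fs).prod
      = myQ (x+i) rest := by
  induction rest with
  | nil => intro i x; simp [myQ]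
  | cons b rest ih =>
    intro i x
    rw [List.zipIdx_cons, List.flatMap_cons, List.map_append, List.prod_append,
      List.map_replicate, List.prod_replicate, ih (i+1) x]
    rfl

lemma qx_coeff (k x : ℕ) (a : List ℕ) :
    (PowerSeries.coeff k) (myQ x a) = (Qx (k:ℤ) x a : ℤ) := by
  have h3 := enum_flat a 0 x
  rw [Nat.add_zero] at h3
  calc (PowerSeries.coeff k) (myQ x a)
      = (PowerSeries.coeff k)
          ((((a.zipIdx 0).flatMap fun q => List.replicate q.1 (x + q.2)).map Fs).prod) := by
        rw [h3]
    _ = (P ((k:ℕ):ℤ) ((a.zipIdx 0).flatMap fun q => List.replicate q.1 (x + q.2)) : ℤ) := by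
        rw [← p_series, PowerSeries.coeff_mk]
    _ = (Qx (k:ℤ) x a : ℤ) := rfl

lemma main_series (y c a₁ : ℕ) (l : List ℕ) :
    myQ (y+1) ((c+1) :: a₁ :: l) =
      PowerSeries.X * (myQ (y+1) ((c+1) :: a₁ :: l) + myQ (y+1) ((c+1) :: a₁ :: l)
        + myQ y (1 :: c :: a₁ :: l)
        + myQ (y+1) (c :: (a₁+1) :: l)
        - myQ y (1 :: (c+1) :: a₁ :: l)
        - myQ (y+1) ((c+2) :: a₁ :: l)
        - myQ (y+1) ((c+1) :: (a₁+1) :: l)) := by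
  have key := fs_identity y
  have e : ∀ b rest x, myQ x (b :: rest) = Fs x ^ b * myQ (x+1) rest := fun b rest x => rfl
  simp only [e, show y+1+1 = y+2 from rfl, show y+1+1+1 = y+3 from rfl, show y+2+1 = y+3 from rfl]
  linear_combination (Fs (y+1)^c * (Fs (y+2)^a₁ * myQ (y+3) l)) * key

end DyckAux

/-- For `n ≥ 1`, `x ≥ 1` and a tuple `(a₀,…,a_k)` written as `a₀ :: a₁ :: l`
with `a₀ ≥ 1` (the case `k = 0` corresponds to `a₁ = 0` and `l = []`, i.e.
extending the tuple by `a₁ = 0`, which does not change the value of `Qx`):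
`Q_n^{(x)}(a₀,…) = 2·Q_{n-1}^{(x)}(a₀,…) + Q_{n-1}^{(x-1)}(1, a₀−1, …)
  + Q_{n-1}^{(x)}(a₀−1, a₁+1, …) − Q_{n-1}^{(x-1)}(1, a₀, …)
  − Q_{n-1}^{(x)}(a₀+1, …) − Q_{n-1}^{(x)}(a₀, a₁+1, …)`. -/
theorem grouped_shorten_fixed_base_first (n : ℕ) (hn : 1 ≤ n) (x : ℕ) (hx : 1 ≤ x)
    (a₀ a₁ : ℕ) (l : List ℕ) (ha : 1 ≤ a₀) :
    (Qx (n : ℤ) x (a₀ :: a₁ :: l) : ℤ) =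
      2 * Qx ((n : ℤ) - 1) x (a₀ :: a₁ :: l)
        + Qx ((n : ℤ) - 1) (x - 1) (1 :: (a₀ - 1) :: a₁ :: l)
        + Qx ((n : ℤ) - 1) x ((a₀ - 1) :: (a₁ + 1) :: l)
        - Qx ((n : ℤ) - 1) (x - 1) (1 :: a₀ :: a₁ :: l)
        - Qx ((n : ℤ) - 1) x ((a₀ + 1) :: a₁ :: l)
        - Qx ((n : ℤ) - 1) x (a₀ :: (a₁ + 1) :: l) := by
  obtain ⟨k, rfl⟩ : ∃ k, n = k + 1 := ⟨n-1, by omega⟩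
  obtain ⟨y, rfl⟩ : ∃ y, x = y + 1 := ⟨x-1, by omega⟩
  obtain ⟨c, rfl⟩ : ∃ c, a₀ = c + 1 := ⟨a₀-1, by omega⟩
  have hser := DyckAux.main_series y c a₁ l
  have hco := congrArg (PowerSeries.coeff (k+1)) hser
  rw [PowerSeries.coeff_succ_X_mul] at hco
  simp only [map_add, map_sub, DyckAux.qx_coeff] at hco
  have hc : ((k+1 : ℕ) : ℤ) - 1 = ((k:ℕ) : ℤ) := by push_cast; ring
  simp only [Nat.add_sub_cancel, hc]
  push_cast at hco ⊢
  linarith [hco]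
end

section
/- For integers n ≥ 1, a ≥ 1, and b ≥ 1, one has Q_n(a,b) = 2·Q_{n-1}(a,b) + Q_{n-1}(a−1, b+1) + Q_{n-1}(a+1, b−1) − Q_{n-1}(a+1, b) − Q_{n-1}(a, b+1). -/
open List DyckStep



namespace PH

lemma toNat_le_pathHeight (l : List ℤ) (k : ℕ) : ((l.take k).sum).toNat ≤ pathHeight l := by
  rcases le_or_gt k l.length with h | h
  · exact Finset.le_sup (f := fun k => ((l.take k).sum).toNat)
      (Finset.mem_range.mpr (by omega))
  · rw [List.take_of_length_le (le_of_lt h)]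
    have := Finset.le_sup (f := fun k => ((l.take k).sum).toNat)
      (Finset.mem_range.mpr (Nat.lt_succ_self l.length))
    simpa [pathHeight] using this

lemma pathHeight_le (l : List ℤ) (m : ℕ) (h : ∀ k, ((l.take k).sum).toNat ≤ m) :
    pathHeight l ≤ m := Finset.sup_le fun k _ => h k

lemma pathHeight_nil : pathHeight [] = 0 := rfl

lemma sum_le_pathHeight (l : List ℤ) (k : ℕ) : (l.take k).sum ≤ (pathHeight l : ℤ) := by
  have := toNat_le_pathHeight l k
  omega

/-- concatenation with a zero-sum first part -/
lemma pathHeight_append (l₁ l₂ : List ℤ) (h : l₁.sum = 0) :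
    pathHeight (l₁ ++ l₂) = max (pathHeight l₁) (pathHeight l₂) := by
  apply _root_.le_antisymm
  · apply pathHeight_le
    intro k
    rw [List.take_append, List.sum_append]
    rcases le_or_gt k l₁.length with hk | hk
    · have : k - l₁.length = 0 := by omega
      rw [this, List.take_zero]
      simp only [List.sum_nil, add_zero]
      have := toNat_le_pathHeight l₁ k
      omega
    · rw [List.take_of_length_le (le_of_lt hk), h]
      have := toNat_le_pathHeight l₂ (k - l₁.length)
      omega
  · apply max_le
    · apply pathHeight_le
      intro k
      have h2 := toNat_le_pathHeight (l₁ ++ l₂) (min k l₁.length)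
      rw [List.take_append] at h2
      have : min k l₁.length - l₁.length = 0 := by omega
      rw [this, List.take_zero] at h2
      simp only [List.append_nil] at h2
      have heq : l₁.take (min k l₁.length) = l₁.take k := by
        rcases le_or_gt k l₁.length with h' | h'
        · rw [min_eq_left h']
        · rw [min_eq_right (le_of_lt h'), List.take_length, List.take_of_length_le (le_of_lt h')]
      rw [heq] at h2
      exact h2
    · apply pathHeight_le
      intro k
      have h2 := toNat_le_pathHeight (l₁ ++ l₂) (l₁.length + k)
      rw [List.take_append] at h2
      rw [List.take_of_length_le (by omega), Nat.add_sub_cancel_left, List.sum_append, h,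
        zero_add] at h2
      exact h2

lemma pathHeight_nest (l : List ℤ) (h : ∀ k, 0 ≤ (l.take k).sum) :
    pathHeight (1 :: (l ++ [-1])) = pathHeight l + 1 := by
  apply _root_.le_antisymm
  · apply pathHeight_le
    intro k
    cases k with
    | zero => simp
    | succ k =>
      rw [List.take_succ_cons, List.sum_cons, List.take_append, List.sum_append]
      have h1 := toNat_le_pathHeight l k
      have h2 : ((([-1] : List ℤ).take (k - l.length)).sum) ≤ 0 := by
        rcases Nat.eq_zero_or_pos (k - l.length) with h' | h'
        · rw [h']; simp
        · rw [List.take_of_length_le (show ([-1] : List ℤ).length ≤ k - l.length by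
            simp only [List.length_singleton]; omega)]; simp
      have h3 : (l.take k).sum ≤ (pathHeight l : ℤ) := sum_le_pathHeight l k
      omega
  · obtain ⟨k, hk, hke⟩ := Finset.exists_mem_eq_sup (Finset.range (l.length + 1))
      ⟨0, Finset.mem_range.mpr (by omega)⟩ (fun k => ((l.take k).sum).toNat)
    rw [Finset.mem_range] at hk
    have h2 := toNat_le_pathHeight (1 :: (l ++ [-1])) (k + 1)
    rw [List.take_succ_cons, List.sum_cons, List.take_append,
      (show k - l.length = 0 by omega), List.take_zero, List.append_nil] at h2
    have h3 := h k
    have : pathHeight l = ((l.take k).sum).toNat := hke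
    omega


/-- step value -/
def sv : DyckStep → ℤ := fun s => match s with | U => 1 | D => -1

def iv : ℤ → DyckStep := fun z => if z = 1 then U else D

lemma sum_map_sv (L : List DyckStep) :
    (L.map sv).sum = (L.count U : ℤ) - (L.count D : ℤ) := by
  induction L with
  | nil => simp
  | cons s L ih =>
    cases s <;> simp [sv, ih, List.count_cons] <;> push_cast <;> ring

lemma count_one_sub_count_neg (l : List ℤ) (h : ∀ s ∈ l, s = 1 ∨ s = -1) :
    l.sum = (l.count 1 : ℤ) - (l.count (-1) : ℤ) := by
  induction l with
  | nil => simp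
  | cons s l ih =>
    have hs := h s (by simp)
    have ih' := ih (fun x hx => h x (by simp [hx]))
    rcases hs with rfl | rfl <;>
      simp [List.count_cons, ih'] <;> push_cast <;> ring

lemma length_eq_counts (l : List ℤ) (h : ∀ s ∈ l, s = 1 ∨ s = -1) :
    l.length = l.count 1 + l.count (-1) := by
  induction l with
  | nil => simp
  | cons s l ih =>
    have hs := h s (by simp)
    have ih' := ih (fun x hx => h x (by simp [hx]))
    rcases hs with rfl | rfl <;> simp [List.count_cons, ih'] <;> omega

lemma length_eq_two_mul (l : List ℤ) (h : IsDyckPath l) : l.length = 2 * l.count 1 := by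
  obtain ⟨h1, _, h3⟩ := h
  have e1 := count_one_sub_count_neg l h1
  have e2 := length_eq_counts l h1
  omega

/-- height bound: 2 * pathHeight ≤ length for a Dyck path -/
lemma two_mul_pathHeight_le (l : List ℤ) (h : IsDyckPath l) : 2 * pathHeight l ≤ l.length := by
  obtain ⟨h1, h2, h3⟩ := h
  have hlen := length_eq_two_mul l ⟨h1, h2, h3⟩
  have : pathHeight l ≤ l.count 1 := by
    apply Finset.sup_le
    intro k _
    have hk1 : ∀ s ∈ l.take k, s = 1 ∨ s = -1 := fun s hs => h1 s (List.mem_of_mem_take hs)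
    have e1 := count_one_sub_count_neg (l.take k) hk1
    have e2 : (l.take k).count 1 ≤ l.count 1 := (List.take_sublist k l).count_le 1
    omega
  omega

lemma iv_sv (s : DyckStep) : iv (sv s) = s := by cases s <;> simp [iv, sv]

lemma sv_iv (z : ℤ) (h : z = 1 ∨ z = -1) : sv (iv z) = z := by
  rcases h with rfl | rfl <;> simp [iv, sv]

lemma count_map_iv_U (l : List ℤ) (h : ∀ s ∈ l, s = 1 ∨ s = -1) :
    (l.map iv).count U = l.count 1 := by
  induction l with
  | nil => simp
  | cons s l ih =>
    have hs := h s (by simp)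
    have ih' := ih (fun x hx => h x (by simp [hx]))
    rcases hs with rfl | rfl <;> simp [List.count_cons, iv, ih']

lemma count_map_iv_D (l : List ℤ) (h : ∀ s ∈ l, s = 1 ∨ s = -1) :
    (l.map iv).count D = l.count (-1) := by
  induction l with
  | nil => simp
  | cons s l ih =>
    have hs := h s (by simp)
    have ih' := ih (fun x hx => h x (by simp [hx]))
    rcases hs with rfl | rfl <;> simp [List.count_cons, iv, ih']

/-- the ℤ-list of a Dyck word -/
def wlist (w : DyckWord) : List ℤ := w.toList.map sv

lemma wlist_isDyckPath (w : DyckWord) : IsDyckPath (wlist w) := by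
  refine ⟨?_, ?_, ?_⟩
  · intro s hs
    simp only [wlist, List.mem_map] at hs
    obtain ⟨a, _, rfl⟩ := hs
    cases a <;> simp [sv]
  · intro k
    rw [wlist, ← List.map_take, sum_map_sv]
    have := w.count_D_le_count_U k
    omega
  · rw [wlist, sum_map_sv, w.count_U_eq_count_D]; ring

/-- word from a Dyck path -/
def toWord (l : List ℤ) (h : IsDyckPath l) : DyckWord where
  toList := l.map iv
  count_U_eq_count_D := by
    rw [count_map_iv_U l h.1, count_map_iv_D l h.1]
    have := count_one_sub_count_neg l h.1
    have := h.2.2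
    omega
  count_D_le_count_U i := by
    rw [← List.map_take, count_map_iv_U _ (fun s hs => h.1 s (List.mem_of_mem_take hs)),
      count_map_iv_D _ (fun s hs => h.1 s (List.mem_of_mem_take hs))]
    have := count_one_sub_count_neg (l.take i) (fun s hs => h.1 s (List.mem_of_mem_take hs))
    have := h.2.1 i
    omega

lemma wlist_toWord (l : List ℤ) (h : IsDyckPath l) : wlist (toWord l h) = l := by
  simp only [wlist, toWord, List.map_map]
  conv_rhs => rw [← List.map_id l]
  exact List.map_congr_left (fun z hz => sv_iv z (h.1 z hz))

lemma toWord_wlist (w : DyckWord) : toWord (wlist w) (wlist_isDyckPath w) = w := by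
  apply DyckWord.ext
  simp only [toWord, wlist, List.map_map]
  conv_rhs => rw [← List.map_id w.toList]
  exact List.map_congr_left (fun s _ => iv_sv s)

/-- the basic equivalence -/
def E0 : DyckWord ≃ {l : List ℤ // IsDyckPath l} where
  toFun w := ⟨wlist w, wlist_isDyckPath w⟩
  invFun l := toWord l.1 l.2
  left_inv w := toWord_wlist w
  right_inv l := Subtype.ext (wlist_toWord l.1 l.2)

lemma length_wlist (w : DyckWord) : (wlist w).length = 2 * w.semilength := by
  rw [wlist, List.length_map, DyckWord.two_mul_semilength_eq_length]

/-- height of a Dyck word -/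
def wh (w : DyckWord) : ℕ := pathHeight (wlist w)


lemma wlist_add (p q : DyckWord) : wlist (p + q) = wlist p ++ wlist q := by
  simp only [wlist]
  have : (p + q).toList = p.toList ++ q.toList := rfl
  rw [this, List.map_append]

lemma wlist_nest (p : DyckWord) : wlist p.nest = 1 :: (wlist p ++ [-1]) := by
  simp only [wlist]
  have : p.nest.toList = [U] ++ p.toList ++ [D] := rfl
  rw [this]
  simp [sv]

lemma wh_zero : wh 0 = 0 := rfl

lemma wh_add (p q : DyckWord) : wh (p + q) = max (wh p) (wh q) := by
  rw [wh, wlist_add, pathHeight_append _ _ (wlist_isDyckPath p).2.2]; rfl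

lemma wh_nest (p : DyckWord) : wh p.nest = wh p + 1 := by
  rw [wh, wlist_nest, pathHeight_nest _ (wlist_isDyckPath p).2.1]; rfl

lemma wh_le_semilength (w : DyckWord) : wh w ≤ w.semilength := by
  have := two_mul_pathHeight_le (wlist w) (wlist_isDyckPath w)
  rw [length_wlist] at this
  rw [wh]
  omega

lemma semilength_eq_zero (w : DyckWord) (h : w.semilength = 0) : w = 0 := by
  have := w.two_mul_semilength_eq_length
  rw [h] at this
  rw [← DyckWord.toList_eq_nil, ← List.length_eq_zero_iff]
  omega

/-- decomposition of heights -/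
lemma wh_decomp (w : DyckWord) (h : w ≠ 0) :
    wh w = max (wh w.insidePart + 1) (wh w.outsidePart) := by
  conv_lhs => rw [← DyckWord.nest_insidePart_add_outsidePart h]
  rw [wh_add, wh_nest]

/-- `Nb n k` : number of Dyck words of semilength `n` and height `< k`. -/
noncomputable def Nb (n k : ℕ) : ℕ :=
  Nat.card {w : DyckWord // w.semilength = n ∧ wh w < k}

/-- `Dc n h` : number of Dyck words of semilength `n` and height `h`. -/
noncomputable def Dc (n h : ℕ) : ℕ :=
  Nat.card {w : DyckWord // w.semilength = n ∧ wh w = h}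

instance : Fintype DyckStep :=
  ⟨⟨{U, D}, by decide⟩, fun s => by cases s <;> decide⟩

instance finite_sl (n : ℕ) (Q : DyckWord → Prop) :
    Finite {w : DyckWord // w.semilength = n ∧ Q w} := by
  have : Finite {l : List DyckStep // l.length = 2 * n} := by
    have := List.finite_length_eq DyckStep (2 * n)
    exact this.to_subtype
  apply Finite.of_injective
    (fun w => (⟨w.1.toList, by rw [← DyckWord.two_mul_semilength_eq_length, w.2.1]⟩ :
      {l : List DyckStep // l.length = 2 * n}))
  intro x y hxy
  exact Subtype.ext (DyckWord.ext (congrArg Subtype.val hxy))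

lemma Nb_zero (n : ℕ) : Nb n 0 = 0 := by
  rw [Nb]
  have : IsEmpty {w : DyckWord // w.semilength = n ∧ wh w < 0} :=
    ⟨fun w => by omega⟩
  exact Nat.card_of_isEmpty

lemma Nb_n_zero (k : ℕ) : Nb 0 (k + 1) = 1 := by
  rw [Nb]
  have : Unique {w : DyckWord // w.semilength = 0 ∧ wh w < k + 1} := {
    default := ⟨0, by simp [wh_zero]⟩
    uniq := fun w => Subtype.ext (semilength_eq_zero w.1 w.2.1) }
  exact Nat.card_unique

lemma nat_card_sigma {ι : Type} [Fintype ι] (f : ι → Type) [∀ i, Finite (f i)] :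
    Nat.card (Σ i, f i) = ∑ i, Nat.card (f i) := by
  classical
  letI := fun i => Fintype.ofFinite (f i)
  simp [Nat.card_eq_fintype_card, Fintype.card_sigma]

abbrev frFiber (n x : ℕ) (i : Fin (n + 1)) : Type :=
  {w : DyckWord // w.semilength = (i : ℕ) ∧ wh w < x} ×
    {w : DyckWord // w.semilength = n - (i : ℕ) ∧ wh w < x + 1}

lemma frCard (n x : ℕ) :
    Nat.card {w : DyckWord // w.semilength = n + 1 ∧ wh w < x + 1} =
      Nat.card (Σ i : Fin (n + 1), frFiber n x i) := by
  have hne' : ∀ w : {w : DyckWord // w.semilength = n + 1 ∧ wh w < x + 1}, w.1 ≠ 0 := by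
    intro w h0
    have := w.2.1
    rw [h0] at this
    simp at this
  apply _root_.le_antisymm
  · apply Nat.card_le_card_of_injective
      (f := fun w : {w : DyckWord // w.semilength = n + 1 ∧ wh w < x + 1} =>
        (⟨⟨w.1.insidePart.semilength, by
            have := DyckWord.semilength_insidePart_add_semilength_outsidePart_add_one (hne' w)
            have := w.2.1; omega⟩,
          ⟨w.1.insidePart, rfl, by
            have := wh_decomp w.1 (hne' w); have := w.2.2; omega⟩,
          ⟨w.1.outsidePart, by
            simp only [Fin.val_mk]
            have := DyckWord.semilength_insidePart_add_semilength_outsidePart_add_one (hne' w)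
            have := w.2.1; omega, by
            have := wh_decomp w.1 (hne' w); have := w.2.2; omega⟩⟩ :
          Σ i : Fin (n + 1), frFiber n x i))
    intro w w' h
    have h1 := congrArg (fun z : Σ i : Fin (n + 1), frFiber n x i => z.2.1.1) h
    have h2 := congrArg (fun z : Σ i : Fin (n + 1), frFiber n x i => z.2.2.1) h
    simp only at h1 h2
    apply Subtype.ext
    rw [← DyckWord.nest_insidePart_add_outsidePart (hne' w),
      ← DyckWord.nest_insidePart_add_outsidePart (hne' w'), h1, h2]
  · apply Nat.card_le_card_of_injective
      (f := fun z : Σ i : Fin (n + 1), frFiber n x i =>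
        (⟨z.2.1.1.nest + z.2.2.1, by
          rw [DyckWord.semilength_add, DyckWord.semilength_nest, z.2.1.2.1, z.2.2.2.1]
          have := z.1.2
          omega, by
          rw [wh_add, wh_nest]
          have := z.2.1.2.2
          have := z.2.2.2.2
          omega⟩ : {w : DyckWord // w.semilength = n + 1 ∧ wh w < x + 1}))
    rintro ⟨i, p, q⟩ ⟨i', p', q'⟩ h
    have hval : p.1.nest + q.1 = p'.1.nest + q'.1 := congrArg Subtype.val h
    have hp : p.1 = p'.1 := by
      have e1 : (p.1.nest + q.1).insidePart = p.1 := by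
        rw [DyckWord.insidePart_add p.1.nest_ne_zero, DyckWord.insidePart_nest]
      have e2 : (p'.1.nest + q'.1).insidePart = p'.1 := by
        rw [DyckWord.insidePart_add p'.1.nest_ne_zero, DyckWord.insidePart_nest]
      rw [← e1, ← e2, hval]
    have hq : q.1 = q'.1 := by
      have e1 : (p.1.nest + q.1).outsidePart = q.1 := by
        rw [DyckWord.outsidePart_add p.1.nest_ne_zero, DyckWord.outsidePart_nest, zero_add]
      have e2 : (p'.1.nest + q'.1).outsidePart = q'.1 := by
        rw [DyckWord.outsidePart_add p'.1.nest_ne_zero, DyckWord.outsidePart_nest, zero_add]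
      rw [← e1, ← e2, hval]
    have hi : i = i' := by
      apply Fin.ext
      rw [← p.2.1, ← p'.2.1, hp]
    subst hi
    exact congrArg (Sigma.mk i) (Prod.ext (Subtype.ext hp) (Subtype.ext hq))

lemma Nb_rec (n x : ℕ) :
    Nb (n + 1) (x + 1) = ∑ i ∈ Finset.range (n + 1), Nb i x * Nb (n - i) (x + 1) := by
  rw [Nb, frCard n x, nat_card_sigma]
  rw [Finset.sum_range fun i => Nb i x * Nb (n - i) (x + 1)]
  apply Finset.sum_congr rfl
  intro i _
  rw [frFiber, Nat.card_prod, Nb, Nb]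


lemma Nb_split (n k : ℕ) : Nb n (k + 1) = Nb n k + Dc n k := by
  have hs : {w : DyckWord | w.semilength = n ∧ wh w < k + 1} =
      {w : DyckWord | w.semilength = n ∧ wh w < k} ∪
        {w : DyckWord | w.semilength = n ∧ wh w = k} := by
    ext w
    simp only [Set.mem_setOf_eq, Set.mem_union]
    omega
  have hd : Disjoint {w : DyckWord | w.semilength = n ∧ wh w < k}
      {w : DyckWord | w.semilength = n ∧ wh w = k} := by
    rw [Set.disjoint_left]
    intro w hw hw'
    simp only [Set.mem_setOf_eq] at hw hw'
    omega
  have h1 : Nb n (k + 1) = ({w : DyckWord | w.semilength = n ∧ wh w < k + 1}).ncard := rfl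
  have h2 : Nb n k = ({w : DyckWord | w.semilength = n ∧ wh w < k}).ncard := rfl
  have h3 : Dc n k = ({w : DyckWord | w.semilength = n ∧ wh w = k}).ncard := rfl
  haveI i1 : Finite ↥{w : DyckWord | w.semilength = n ∧ wh w < k} := finite_sl n _
  haveI i2 : Finite ↥{w : DyckWord | w.semilength = n ∧ wh w = k} := finite_sl n _
  rw [h1, h2, h3, hs, Set.ncard_union_eq hd (Set.toFinite _) (Set.toFinite _)]

open PowerSeries in
/-- generating function of `Nb · k` -/
noncomputable def Eb (k : ℕ) : PowerSeries ℤ := PowerSeries.mk fun n => (Nb n k : ℤ)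

open PowerSeries in
/-- generating function of `Dc · h` -/
noncomputable def fser (h : ℕ) : PowerSeries ℤ := Eb (h + 1) - Eb h

open PowerSeries in
lemma coeff_fser (h n : ℕ) : coeff n (fser h) = (Dc n h : ℤ) := by
  rw [fser, map_sub, Eb, Eb, coeff_mk, coeff_mk, Nb_split n h]
  push_cast
  ring

open PowerSeries in
lemma Eb_zero : Eb 0 = 0 := by
  ext n
  rw [Eb, coeff_mk, Nb_zero]
  simp

open PowerSeries in
lemma Eb_eq (x : ℕ) : Eb (x + 1) = 1 + X * Eb x * Eb (x + 1) := by
  ext n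
  simp only [Eb, coeff_mk]
  cases n with
  | zero =>
    simp only [map_add, coeff_zero_one, mul_assoc, coeff_zero_eq_constantCoeff, map_mul,
      constantCoeff_X, zero_mul]
    rw [Nb_n_zero]
    norm_num
  | succ n =>
    rw [map_add, mul_assoc, PowerSeries.coeff_succ_X_mul, PowerSeries.coeff_mul]
    have h1 : (PowerSeries.coeff (n + 1)) (1 : PowerSeries ℤ) = 0 := by
      rw [PowerSeries.coeff_one]
      simp
    rw [h1, zero_add, Nb_rec n x, Finset.Nat.sum_antidiagonal_eq_sum_range_succ_mk]
    push_cast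
    apply Finset.sum_congr rfl
    intro i _
    simp only [Eb, coeff_mk]

open PowerSeries in
lemma Eb_ne_zero (x : ℕ) : Eb (x + 1) ≠ 0 := by
  intro h
  have := congrArg (PowerSeries.coeff 0) h
  rw [Eb, coeff_mk, Nb_n_zero] at this
  simp at this

open PowerSeries in
/-- The key power-series identity. -/
lemma key_identity (x : ℕ) :
    fser x * fser (x + 1) =
      X * (fser x + fser (x + 1)) * (fser x + fser (x + 1) - fser x * fser (x + 1)) := by
  set u := Eb x with hu
  set v := Eb (x + 1) with hv0
  set w := Eb (x + 2) with hw0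
  have hv : v = 1 + X * u * v := Eb_eq x
  have hw : w = 1 + X * v * w := Eb_eq (x + 1)
  have hvne : v ≠ 0 := Eb_ne_zero x
  have h1 : (w - v) = X * v * ((v - u) + (w - v)) := by linear_combination hw - hv
  have h2 : v * (v - u) - (v - u) - (w - v) + (v - u) * (w - v) = 0 := by
    linear_combination w * hv - u * hw
  have hexp : fser x = v - u := rfl
  have hexp2 : fser (x + 1) = w - v := by rw [fser]
  rw [hexp, hexp2]
  apply mul_left_cancel₀ hvne
  linear_combination ((v - u) + (w - v) - (v - u) * (w - v)) * h1 + (w - v) * h2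


lemma finite_of_imp {α : Type} {A B : α → Prop} (h : ∀ a, B a → A a)
    (hA : Finite {a // A a}) : Finite {a // B a} := by
  apply Finite.of_injective (fun b : {a // B a} => (⟨b.1, h _ b.2⟩ : {a // A a}))
  intro x y hxy
  simp only [Subtype.mk.injEq] at hxy
  exact Subtype.ext hxy

lemma finite_dyck_le (N : ℕ) : Finite {l : List ℤ // IsDyckPath l ∧ l.length ≤ N} := by
  have : Finite {L : List DyckStep // L.length ≤ N} :=
    Set.Finite.to_subtype (List.finite_length_le DyckStep N)
  apply Finite.of_injective (fun l : {l : List ℤ // IsDyckPath l ∧ l.length ≤ N} =>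
    (⟨l.1.map iv, by rw [List.length_map]; exact l.2.2⟩ : {L : List DyckStep // L.length ≤ N}))
  intro x y hxy
  have h1 := congrArg (fun L : {L : List DyckStep // L.length ≤ N} => L.1.map sv) hxy
  simp only [List.map_map] at h1
  apply Subtype.ext
  have e : ∀ l : List ℤ, IsDyckPath l → l.map (sv ∘ iv) = l := by
    intro l hl
    conv_rhs => rw [← List.map_id l]
    exact List.map_congr_left (fun z hz => sv_iv z (hl.1 z hz))
  rw [← e x.1 x.2.1, ← e y.1 y.2.1]
  exact h1

lemma finite_tuple_le (m N : ℕ) :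
    Finite {p : Fin m → List ℤ // ∀ i, IsDyckPath (p i) ∧ (p i).length ≤ N} := by
  haveI := finite_dyck_le N
  apply Finite.of_injective
    (fun p : {p : Fin m → List ℤ // ∀ i, IsDyckPath (p i) ∧ (p i).length ≤ N} =>
      (fun i => (⟨p.1 i, p.2 i⟩ : {l : List ℤ // IsDyckPath l ∧ l.length ≤ N})))
  intro x y hxy
  apply Subtype.ext
  funext i
  exact congrArg Subtype.val (congrFun hxy i)

/-- single-path count on the list side equals `Dc` -/
lemma card_single (i h : ℕ) :
    Nat.card {l : List ℤ // IsDyckPath l ∧ l.length = 2 * i ∧ pathHeight l = h} = Dc i h := by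
  rw [Dc]
  have e1 : {w : DyckWord // w.semilength = i ∧ wh w = h} ≃
      {l' : {l : List ℤ // IsDyckPath l} // l'.1.length = 2 * i ∧ pathHeight l'.1 = h} := by
    apply Equiv.subtypeEquiv E0
    intro w
    have hl : (E0 w).1 = wlist w := rfl
    rw [hl, length_wlist]
    constructor
    · rintro ⟨h1, h2⟩
      exact ⟨by omega, h2⟩
    · rintro ⟨h1, h2⟩
      exact ⟨by omega, h2⟩
  have e2 : {l' : {l : List ℤ // IsDyckPath l} // l'.1.length = 2 * i ∧ pathHeight l'.1 = h} ≃
      {l : List ℤ // IsDyckPath l ∧ l.length = 2 * i ∧ pathHeight l = h} :=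
    Equiv.subtypeSubtypeEquivSubtypeInter IsDyckPath
      (fun l => l.length = 2 * i ∧ pathHeight l = h)
  exact Nat.card_congr (e1.trans e2).symm

/-- generic convolution counting lemma -/
lemma card_conv {X Y : Type} (PX : X → Prop) (PY : Y → Prop) (fX : X → ℕ) (fY : Y → ℕ) (n : ℕ)
    (hfX : ∀ i : ℕ, Finite {x // PX x ∧ fX x = 2 * i})
    (hfY : ∀ i : ℕ, Finite {y // PY y ∧ fY y = 2 * i})
    (hfinZ : Finite {z : X × Y // PX z.1 ∧ PY z.2 ∧ fX z.1 + fY z.2 = 2 * n})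
    (heven : ∀ x, PX x → 2 ∣ fX x) :
    Nat.card {z : X × Y // PX z.1 ∧ PY z.2 ∧ fX z.1 + fY z.2 = 2 * n} =
      ∑ i ∈ Finset.range (n + 1),
        Nat.card {x // PX x ∧ fX x = 2 * i} * Nat.card {y // PY y ∧ fY y = 2 * (n - i)} := by
  haveI : ∀ i : Fin (n + 1), Finite ({x // PX x ∧ fX x = 2 * (i : ℕ)} ×
      {y // PY y ∧ fY y = 2 * (n - (i : ℕ))}) := fun i => by
    haveI := hfX (i : ℕ); haveI := hfY (n - (i : ℕ)); infer_instance
  have key : Nat.card {z : X × Y // PX z.1 ∧ PY z.2 ∧ fX z.1 + fY z.2 = 2 * n} =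
      Nat.card (Σ i : Fin (n + 1), ({x // PX x ∧ fX x = 2 * (i : ℕ)} ×
        {y // PY y ∧ fY y = 2 * (n - (i : ℕ))})) := by
    apply _root_.le_antisymm
    · apply Nat.card_le_card_of_injective
        (f := fun z : {z : X × Y // PX z.1 ∧ PY z.2 ∧ fX z.1 + fY z.2 = 2 * n} =>
          (⟨⟨fX z.1.1 / 2, by
              obtain ⟨d, hd⟩ := heven z.1.1 z.2.1
              have := z.2.2.2
              omega⟩,
            ⟨z.1.1, z.2.1, by
              obtain ⟨d, hd⟩ := heven z.1.1 z.2.1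
              simp only [Fin.val_mk]
              omega⟩,
            ⟨z.1.2, z.2.2.1, by
              obtain ⟨d, hd⟩ := heven z.1.1 z.2.1
              have := z.2.2.2
              simp only [Fin.val_mk]
              omega⟩⟩ :
            Σ i : Fin (n + 1), ({x // PX x ∧ fX x = 2 * (i : ℕ)} ×
              {y // PY y ∧ fY y = 2 * (n - (i : ℕ))})))
      intro z z' h
      have h1 := congrArg (fun s : (Σ i : Fin (n + 1), ({x // PX x ∧ fX x = 2 * (i : ℕ)} ×
        {y // PY y ∧ fY y = 2 * (n - (i : ℕ))})) => s.2.1.1) h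
      have h2 := congrArg (fun s : (Σ i : Fin (n + 1), ({x // PX x ∧ fX x = 2 * (i : ℕ)} ×
        {y // PY y ∧ fY y = 2 * (n - (i : ℕ))})) => s.2.2.1) h
      simp only at h1 h2
      exact Subtype.ext (Prod.ext h1 h2)
    · apply Nat.card_le_card_of_injective
        (f := fun s : (Σ i : Fin (n + 1), ({x // PX x ∧ fX x = 2 * (i : ℕ)} ×
          {y // PY y ∧ fY y = 2 * (n - (i : ℕ))})) =>
          (⟨(s.2.1.1, s.2.2.1), s.2.1.2.1, s.2.2.2.1, by
            show fX s.2.1.1 + fY s.2.2.1 = 2 * n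
            have e1 := s.2.1.2.2
            have e2 := s.2.2.2.2
            have := s.1.2
            omega⟩ : {z : X × Y // PX z.1 ∧ PY z.2 ∧ fX z.1 + fY z.2 = 2 * n}))
      rintro ⟨i, x, y⟩ ⟨i', x', y'⟩ h
      have hval := congrArg Subtype.val h
      simp only at hval
      have hx : x.1 = x'.1 := congrArg Prod.fst hval
      have hy : y.1 = y'.1 := congrArg Prod.snd hval
      have hi : i = i' := by
        apply Fin.ext
        have e1 := x.2.2
        have e2 := x'.2.2
        rw [hx] at e1
        omega
      subst hi
      exact congrArg (Sigma.mk i) (Prod.ext (Subtype.ext hx) (Subtype.ext hy))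
  rw [key, nat_card_sigma]
  rw [Finset.sum_range fun i =>
    Nat.card {x // PX x ∧ fX x = 2 * i} * Nat.card {y // PY y ∧ fY y = 2 * (n - i)}]
  apply Finset.sum_congr rfl
  intro i _
  rw [Nat.card_prod]



lemma P_nil (n : ℕ) : P (n : ℤ) [] = if n = 0 then 1 else 0 := by
  rw [P]
  rcases eq_or_ne n 0 with rfl | hn
  · rw [if_pos rfl]
    haveI : Unique {p : Fin ([] : List ℕ).length → List ℤ //
        (∀ i, IsDyckPath (p i)) ∧ (∑ i, ((p i).length : ℤ)) = 2 * ((0 : ℕ) : ℤ) ∧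
        ∀ i, pathHeight (p i) = ([] : List ℕ).get i} := {
      default := ⟨fun i => i.elim0, fun i => i.elim0, by simp, fun i => i.elim0⟩
      uniq := fun p => Subtype.ext (funext fun i => i.elim0) }
    exact Nat.card_unique
  · rw [if_neg hn]
    haveI : IsEmpty {p : Fin ([] : List ℕ).length → List ℤ //
        (∀ i, IsDyckPath (p i)) ∧ (∑ i, ((p i).length : ℤ)) = 2 * ((n : ℕ) : ℤ) ∧
        ∀ i, pathHeight (p i) = ([] : List ℕ).get i} := by
      constructor
      intro p
      have h1 := p.2.2.1
      have h2 : (∑ i : Fin ([] : List ℕ).length, ((p.1 i).length : ℤ)) = 0 := by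
        simp [Finset.sum_empty]
      rw [h2] at h1
      omega
    exact Nat.card_of_isEmpty

def splitEquiv (n : ℕ) (h0 : ℕ) (hs : List ℕ) :
    {p : Fin (hs.length + 1) → List ℤ //
      (∀ i, IsDyckPath (p i)) ∧
      (∑ i, ((p i).length : ℤ)) = 2 * ((n : ℕ) : ℤ) ∧
      ∀ i, pathHeight (p i) = (h0 :: hs).get i} ≃
    {z : List ℤ × (Fin hs.length → List ℤ) //
      (IsDyckPath z.1 ∧ pathHeight z.1 = h0) ∧
      ((∀ i, IsDyckPath (z.2 i)) ∧ ∀ i, pathHeight (z.2 i) = hs.get i) ∧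
      z.1.length + (∑ i, (z.2 i).length) = 2 * n} where
  toFun p := ⟨(p.1 0, fun i => p.1 i.succ),
    ⟨p.2.1 0, p.2.2.2 0⟩,
    ⟨fun i => p.2.1 i.succ, fun i => p.2.2.2 i.succ⟩, by
      have h1 := p.2.2.1
      rw [Fin.sum_univ_succ] at h1
      exact_mod_cast h1⟩
  invFun z := ⟨Fin.cons z.1.1 z.1.2, by
      intro i
      refine Fin.cases ?_ ?_ i
      · rw [Fin.cons_zero]
        exact z.2.1.1
      · intro j
        rw [Fin.cons_succ]
        exact z.2.2.1.1 j, by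
      rw [Fin.sum_univ_succ]
      simp only [Fin.cons_zero, Fin.cons_succ]
      have h1 := z.2.2.2
      exact_mod_cast h1, by
      intro i
      refine Fin.cases ?_ ?_ i
      · rw [Fin.cons_zero]
        exact z.2.1.2
      · intro j
        rw [Fin.cons_succ]
        exact z.2.2.1.2 j⟩
  left_inv p := by
    apply Subtype.ext
    exact Fin.cons_self_tail p.1
  right_inv z := by
    apply Subtype.ext
    obtain ⟨⟨a, f⟩, hz⟩ := z
    refine Prod.ext ?_ ?_
    · exact Fin.cons_zero (α := fun _ : Fin (hs.length + 1) => List ℤ) a f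
    · funext i
      exact Fin.cons_succ (α := fun _ : Fin (hs.length + 1) => List ℤ) a f i

lemma P_cons (n : ℕ) (h0 : ℕ) (hs : List ℕ) :
    P (n : ℤ) (h0 :: hs) =
      ∑ i ∈ Finset.range (n + 1), Dc i h0 * P (((n - i : ℕ) : ℤ)) hs := by
  have heven : ∀ l : List ℤ, (IsDyckPath l ∧ pathHeight l = h0) → 2 ∣ l.length := by
    intro l hl
    exact ⟨l.count 1, length_eq_two_mul l hl.1⟩
  haveI instX : ∀ i : ℕ, Finite {l : List ℤ //
      (IsDyckPath l ∧ pathHeight l = h0) ∧ l.length = 2 * i} := by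
    intro i
    exact finite_of_imp (fun l hl => ⟨hl.1.1, le_of_eq hl.2⟩) (finite_dyck_le (2 * i))
  haveI instY : ∀ i : ℕ, Finite {y : Fin hs.length → List ℤ //
      ((∀ j, IsDyckPath (y j)) ∧ ∀ j, pathHeight (y j) = hs.get j) ∧
        (∑ j, (y j).length) = 2 * i} := by
    intro i
    apply finite_of_imp (A := fun y : Fin hs.length → List ℤ =>
      ∀ j, IsDyckPath (y j) ∧ (y j).length ≤ 2 * i)
    · intro y hy j
      refine ⟨hy.1.1 j, ?_⟩
      rw [← hy.2]
      exact Finset.single_le_sum (f := fun i => (y i).length) (fun _ _ => Nat.zero_le _)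
        (Finset.mem_univ j)
    · exact finite_tuple_le hs.length (2 * i)
  haveI instZ : Finite {z : List ℤ × (Fin hs.length → List ℤ) //
      (IsDyckPath z.1 ∧ pathHeight z.1 = h0) ∧
      ((∀ i, IsDyckPath (z.2 i)) ∧ ∀ i, pathHeight (z.2 i) = hs.get i) ∧
      z.1.length + (∑ i, (z.2 i).length) = 2 * n} := by
    haveI h1 := finite_dyck_le (2 * n)
    haveI h2 := finite_tuple_le hs.length (2 * n)
    apply Finite.of_injective (fun z => ((⟨z.1.1, z.2.1.1, by
        have := z.2.2.2; omega⟩ : {l : List ℤ // IsDyckPath l ∧ l.length ≤ 2 * n}),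
      (⟨z.1.2, fun j => ⟨z.2.2.1.1 j, by
        have h3 : (z.1.2 j).length ≤ ∑ i, (z.1.2 i).length :=
          Finset.single_le_sum (f := fun i => (z.1.2 i).length) (fun _ _ => Nat.zero_le _)
            (Finset.mem_univ j)
        have := z.2.2.2
        omega⟩⟩ : {p : Fin hs.length → List ℤ //
          ∀ i, IsDyckPath (p i) ∧ (p i).length ≤ 2 * n})))
    intro x y hxy
    have e1 := congrArg (fun t : ({l : List ℤ // IsDyckPath l ∧ l.length ≤ 2 * n} ×
      {p : Fin hs.length → List ℤ // ∀ i, IsDyckPath (p i) ∧ (p i).length ≤ 2 * n}) =>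
        t.1.1) hxy
    have e2 := congrArg (fun t : ({l : List ℤ // IsDyckPath l ∧ l.length ≤ 2 * n} ×
      {p : Fin hs.length → List ℤ // ∀ i, IsDyckPath (p i) ∧ (p i).length ≤ 2 * n}) =>
        t.2.1) hxy
    simp only at e1 e2
    exact Subtype.ext (Prod.ext e1 e2)
  rw [P]
  refine (Nat.card_congr (splitEquiv n h0 hs)).trans ?_
  refine (card_conv (fun l : List ℤ => IsDyckPath l ∧ pathHeight l = h0)
    (fun y : Fin hs.length → List ℤ => (∀ j, IsDyckPath (y j)) ∧ ∀ j, pathHeight (y j) = hs.get j)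
    List.length (fun y => ∑ j, (y j).length) n instX instY instZ heven).trans ?_
  apply Finset.sum_congr rfl
  intro i hi
  rw [Finset.mem_range] at hi
  congr 1
  · rw [← card_single i h0]
    apply Nat.card_congr
    apply Equiv.subtypeEquivRight
    intro l
    tauto
  · rw [P]
    apply Nat.card_congr
    apply Equiv.subtypeEquivRight
    intro y
    constructor
    · rintro ⟨⟨hy1, hy2⟩, hy3⟩
      refine ⟨hy1, ?_, hy2⟩
      exact_mod_cast hy3
    · rintro ⟨hy1, hy3, hy2⟩
      refine ⟨⟨hy1, hy2⟩, ?_⟩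
      exact_mod_cast hy3

open PowerSeries in
lemma P_eq_coeff (hs : List ℕ) (n : ℕ) :
    ((P (n : ℤ) hs : ℤ)) = coeff n (hs.map fser).prod := by
  induction hs generalizing n with
  | nil =>
    rw [P_nil]
    simp only [List.map_nil, List.prod_nil, coeff_one]
    split_ifs <;> simp
  | cons h0 hs ih =>
    rw [List.map_cons, List.prod_cons, PowerSeries.coeff_mul,
      Finset.Nat.sum_antidiagonal_eq_sum_range_succ_mk, P_cons]
    push_cast
    apply Finset.sum_congr rfl
    intro i _
    rw [coeff_fser, ih (n - i)]


lemma Qx_pair (n : ℤ) (x a b : ℕ) :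
    Qx n x [a, b] = P n (List.replicate a x ++ List.replicate b (x + 1)) := by
  rw [Qx]
  congr 1
  show List.replicate a (x + 0) ++ (List.replicate b (x + 1) ++ []) = _
  simp

open PowerSeries in
lemma Qx_coeff (n x a b : ℕ) :
    ((Qx (n : ℤ) x [a, b] : ℤ)) = coeff n (fser x ^ a * fser (x + 1) ^ b) := by
  rw [Qx_pair, P_eq_coeff]
  congr 1
  rw [List.map_append, List.map_replicate, List.map_replicate, List.prod_append,
    List.prod_replicate, List.prod_replicate]

open PowerSeries in
lemma key_pow (x a b : ℕ) :
    fser x ^ (a + 1) * fser (x + 1) ^ (b + 1) =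
      X * (fser x ^ (a + 1) * fser (x + 1) ^ (b + 1)
        + fser x ^ (a + 1) * fser (x + 1) ^ (b + 1)
        + fser x ^ a * fser (x + 1) ^ (b + 2)
        + fser x ^ (a + 2) * fser (x + 1) ^ b
        - fser x ^ (a + 2) * fser (x + 1) ^ (b + 1)
        - fser x ^ (a + 1) * fser (x + 1) ^ (b + 2)) := by
  linear_combination (fser x ^ a * fser (x + 1) ^ b) * key_identity x

lemma Qx_rec (m x a b : ℕ) :
    ((Qx (((m : ℕ) : ℤ) + 1) x [a + 1, b + 1] : ℤ)) =
      2 * Qx ((m : ℕ) : ℤ) x [a + 1, b + 1]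
        + Qx ((m : ℕ) : ℤ) x [a, b + 2]
        + Qx ((m : ℕ) : ℤ) x [a + 2, b]
        - Qx ((m : ℕ) : ℤ) x [a + 2, b + 1]
        - Qx ((m : ℕ) : ℤ) x [a + 1, b + 2] := by
  have hc : ((m : ℕ) : ℤ) + 1 = ((m + 1 : ℕ) : ℤ) := by push_cast; ring
  rw [hc, Qx_coeff, Qx_coeff, Qx_coeff, Qx_coeff, Qx_coeff, Qx_coeff]
  conv_lhs => rw [key_pow x a b]
  rw [PowerSeries.coeff_succ_X_mul]
  rw [map_sub, map_sub, map_add, map_add, map_add]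
  ring

lemma Qx_vanish (n a b : ℕ) : Qx ((n : ℕ) : ℤ) n [a, b + 1] = 0 := by
  rw [Qx_pair, P]
  haveI : IsEmpty {p : Fin (List.replicate a n ++ List.replicate (b + 1) (n + 1)).length → List ℤ //
      (∀ i, IsDyckPath (p i)) ∧
      (∑ i, ((p i).length : ℤ)) = 2 * ((n : ℕ) : ℤ) ∧
      ∀ i, pathHeight (p i) = (List.replicate a n ++ List.replicate (b + 1) (n + 1)).get i} := by
    constructor
    rintro ⟨p, hp1, hp2, hp3⟩
    have hlen : (List.replicate a n ++ List.replicate (b + 1) (n + 1)).length = a + (b + 1) := by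
      simp
    have hia : a < (List.replicate a n ++ List.replicate (b + 1) (n + 1)).length := by omega
    set i0 : Fin (List.replicate a n ++ List.replicate (b + 1) (n + 1)).length := ⟨a, hia⟩
    have hget : (List.replicate a n ++ List.replicate (b + 1) (n + 1)).get i0 = n + 1 := by
      rw [List.get_eq_getElem]
      rw [List.getElem_append_right (by simp [i0])]
      simp
    have h1 := hp3 i0
    rw [hget] at h1
    have h2 := two_mul_pathHeight_le (p i0) (hp1 i0)
    rw [h1] at h2
    have h3 : ((p i0).length : ℤ) ≤ ∑ i, ((p i).length : ℤ) := by
      apply Finset.single_le_sum (f := fun i => ((p i).length : ℤ))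
      · intro i _
        positivity
      · exact Finset.mem_univ i0
    rw [hp2] at h3
    omega
  exact Nat.card_of_isEmpty

lemma Qx_vanish' (m a b : ℕ) : ((Qx (((m : ℕ) : ℤ) + 1) (m + 1) [a, b + 1] : ℤ)) = 0 := by
  have hc : ((m : ℕ) : ℤ) + 1 = ((m + 1 : ℕ) : ℤ) := by push_cast; ring
  rw [hc, Qx_vanish (m + 1) a b]
  simp

lemma Q_nat (n : ℕ) (l : List ℕ) :
    Q ((n : ℕ) : ℤ) l = ∑ x ∈ Finset.range (n + 1), Qx ((n : ℕ) : ℤ) x l := by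
  rw [Q, Int.toNat_natCast]

end PH

/-- For `n ≥ 1`, `a ≥ 1` and `b ≥ 1`,
`Q_n(a,b) = 2·Q_{n-1}(a,b) + Q_{n-1}(a−1, b+1) + Q_{n-1}(a+1, b−1)
  − Q_{n-1}(a+1, b) − Q_{n-1}(a, b+1)`. -/
theorem grouped_shorten_pair (n : ℕ) (hn : 1 ≤ n) (a b : ℕ) (ha : 1 ≤ a) (hb : 1 ≤ b) :
    (Q (n : ℤ) [a, b] : ℤ) =
      2 * Q ((n : ℤ) - 1) [a, b] + Q ((n : ℤ) - 1) [a - 1, b + 1]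
        + Q ((n : ℤ) - 1) [a + 1, b - 1]
        - Q ((n : ℤ) - 1) [a + 1, b] - Q ((n : ℤ) - 1) [a, b + 1] := by
  open PH in
  obtain ⟨m, rfl⟩ : ∃ m, n = m + 1 := ⟨n - 1, by omega⟩
  obtain ⟨a0, rfl⟩ : ∃ a0, a = a0 + 1 := ⟨a - 1, by omega⟩
  obtain ⟨b0, rfl⟩ : ∃ b0, b = b0 + 1 := ⟨b - 1, by omega⟩
  have hcast : ((m + 1 : ℕ) : ℤ) - 1 = ((m : ℕ) : ℤ) := by push_cast; ring
  rw [hcast]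
  have hl1 : a0 + 1 - 1 = a0 := by omega
  have hl2 : b0 + 1 - 1 = b0 := by omega
  rw [hl1, hl2]
  rw [Q_nat, Q_nat, Q_nat, Q_nat, Q_nat, Q_nat]
  push_cast
  rw [Finset.sum_range_succ]
  rw [Qx_vanish' m (a0 + 1) b0]
  rw [add_zero]
  rw [Finset.sum_congr rfl (fun x _ => Qx_rec m x a0 b0)]
  simp only [show b0 + 1 + 1 = b0 + 2 from rfl, show a0 + 1 + 1 = a0 + 2 from rfl,
    Finset.sum_add_distrib, Finset.sum_sub_distrib, Finset.mul_sum]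
end
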